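/- arXiv:2112.04897 — 5 statements merged into one kernel-verified Lean document; each statement's English description precedes it below -/
import Mathlib

section
/- Let Λ_{CC'} = {W_j, Λ_j, v_j} be a (C,C')-controlled g-fusion frame for H with bounds A, B, and let θ ∈ End*_A(H) be injective with closed range, commuting with C, C' and with every P_{W_j}. Then {W_j, Λ_j θ, v_j} is a (C,C')-controlled g-fusion frame for H with bounds A‖(θ*θ)⁻¹‖⁻¹ and B‖θ‖². -/
open scoped RightActions

noncomputable section

/-- The Hilbert C⋆-module class as it stood in Mathlib (December 2024): a right action of
`Aᵐᵒᵖ` and an `A`-valued inner product, `A`-linear on the right in the second argument. -/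
class CStarModuleRight (A E : Type*) [NonUnitalSemiring A] [StarRing A] [Module ℂ A]
    [AddCommGroup E] [Module ℂ E] [PartialOrder A] [SMul Aᵐᵒᵖ E] [Norm A] [Norm E]
    extends Inner A E where
  inner_add_right {x} {y} {z} : inner x (y + z) = inner x y + inner x z
  inner_self_nonneg {x} : 0 ≤ inner x x
  inner_self {x} : inner x x = 0 ↔ x = 0
  inner_op_smul_right {a : A} {x y : E} : inner x (y <• a) = inner x y * a
  inner_smul_right_complex {z : ℂ} {x} {y} : inner x (z • y) = z • inner x y
  star_inner x y : star (inner x y) = inner y x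
  norm_eq_sqrt_norm_inner_self x : ‖x‖ = √‖inner x x‖

variable {A : Type*} [CStarAlgebra A] [PartialOrder A] [StarOrderedRing A]
variable {H : Type*} [NormedAddCommGroup H] [NormedSpace ℂ H] [SMul Aᵐᵒᵖ H] [CStarModuleRight A H]
variable {J : Type*} {Hs : J → Type*} [∀ j, NormedAddCommGroup (Hs j)]
  [∀ j, NormedSpace ℂ (Hs j)] [∀ j, SMul Aᵐᵒᵖ (Hs j)] [∀ j, CStarModuleRight A (Hs j)]

lemma CStarModuleRight.inner_op_smul_left {a : A} {x y : H} :
    inner A (x <• a) y = star a * inner A x y := by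
  rw [← CStarModuleRight.star_inner, CStarModuleRight.inner_op_smul_right, star_mul,
    CStarModuleRight.star_inner]

lemma CStarModuleRight.inner_sub_right {x y z : H} :
    inner A x (y - z) = inner A x y - inner A x z := by
  have h : inner A x (y - z + z) = inner A x (y - z) + inner A x z :=
    CStarModuleRight.inner_add_right
  rw [sub_add_cancel] at h
  exact eq_sub_of_add_eq h.symm

lemma CStarModuleRight.inner_sub_left {x y z : H} :
    inner A (x - y) z = inner A x z - inner A y z := by
  rw [← CStarModuleRight.star_inner, CStarModuleRight.inner_sub_right, star_sub,
    CStarModuleRight.star_inner, CStarModuleRight.star_inner]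

lemma CStarModuleRight.inner_smul_right_real {r : ℝ} {x y : H} :
    inner A x (r • y) = r • inner A x y := by
  have h₁ : r • y = (r : ℂ) • y := by simp
  rw [h₁, CStarModuleRight.inner_smul_right_complex]
  simp

lemma CStarModuleRight.inner_smul_left_real {r : ℝ} {x y : H} :
    inner A (r • x) y = r • inner A x y := by
  rw [← CStarModuleRight.star_inner, CStarModuleRight.inner_smul_right_real, star_smul,
    star_trivial, CStarModuleRight.star_inner]

lemma CStarModuleRight.inner_zero_right {x : H} : inner A x (0 : H) = 0 := by
  have h : inner A x ((0 : H) + 0) = inner A x 0 + inner A x 0 :=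
    CStarModuleRight.inner_add_right
  simpa using h

lemma CStarModuleRight.isSelfAdjoint_inner_self {x : H} : IsSelfAdjoint (inner A x x) :=
  CStarModuleRight.star_inner _ _

lemma CStarModuleRight.norm_sq_eq {x : H} : ‖x‖ ^ 2 = ‖(inner A x x : A)‖ := by
  rw [CStarModuleRight.norm_eq_sqrt_norm_inner_self (A := A) x, Real.sq_sqrt (norm_nonneg _)]

lemma CStarModuleRight.inner_mul_inner_swap_le {x y : H} :
    inner A y x * inner A x y ≤ ‖x‖ ^ 2 • (inner A y y : A) := by
  rcases eq_or_ne x 0 with h | h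
  · subst h
    rw [CStarModuleRight.inner_zero_right, zero_mul, norm_zero]
    simp
  · have h₁ : ∀ (a : A),
        (0 : A) ≤ ‖x‖ ^ 2 • (star a * a) - ‖x‖ ^ 2 • (star a * inner A x y)
                  - ‖x‖ ^ 2 • (inner A y x * a) + ‖x‖ ^ 2 • (‖x‖ ^ 2 • inner A y y) := fun a => by
      calc (0 : A) ≤ inner A (x <• a - ‖x‖ ^ 2 • y) (x <• a - ‖x‖ ^ 2 • y) := by
                      exact CStarModuleRight.inner_self_nonneg
            _ = star a * inner A x x * a - ‖x‖ ^ 2 • (star a * inner A x y)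
                  - ‖x‖ ^ 2 • (inner A y x * a) + ‖x‖ ^ 2 • (‖x‖ ^ 2 • inner A y y) := by
                      simp only [CStarModuleRight.inner_sub_right,
                        CStarModuleRight.inner_op_smul_right, CStarModuleRight.inner_sub_left,
                        CStarModuleRight.inner_op_smul_left, CStarModuleRight.inner_smul_left_real,
                        mul_sub, sub_mul, mul_smul_comm, smul_mul_assoc,
                        CStarModuleRight.inner_smul_right_real, smul_sub, mul_assoc]
                      abel
            _ ≤ ‖x‖ ^ 2 • (star a * a) - ‖x‖ ^ 2 • (star a * inner A x y)
                  - ‖x‖ ^ 2 • (inner A y x * a) + ‖x‖ ^ 2 • (‖x‖ ^ 2 • inner A y y) := by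
                      gcongr
                      calc _ ≤ ‖(inner A x x : A)‖ • (star a * a) :=
                          CStarAlgebra.star_left_conjugate_le_norm_smul
                            CStarModuleRight.isSelfAdjoint_inner_self
                        _ = ‖x‖ ^ 2 • (star a * a) := by rw [CStarModuleRight.norm_sq_eq (A := A)]
    specialize h₁ (inner A x y)
    rw [CStarModuleRight.star_inner] at h₁
    simp only [sub_self, zero_sub, le_neg_add_iff_add_le, add_zero] at h₁
    rwa [smul_le_smul_iff_of_pos_left (pow_pos (norm_pos_iff.mpr h) _)] at h₁

variable (H) in
lemma CStarModuleRight.norm_inner_le {x y : H} : ‖(inner A x y : A)‖ ≤ ‖x‖ * ‖y‖ := by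
  have := calc ‖(inner A x y : A)‖ ^ 2 = ‖inner A y x * inner A x y‖ := by
                rw [← CStarModuleRight.star_inner x, CStarRing.norm_star_mul_self, pow_two]
    _ ≤ ‖‖x‖ ^ 2 • (inner A y y : A)‖ := by
                refine CStarAlgebra.norm_le_norm_of_nonneg_of_le ?_
                  CStarModuleRight.inner_mul_inner_swap_le
                rw [← CStarModuleRight.star_inner x]
                exact star_mul_self_nonneg _
    _ = ‖x‖ ^ 2 * ‖(inner A y y : A)‖ := by simp [norm_smul]
    _ = ‖x‖ ^ 2 * ‖y‖ ^ 2 := by rw [CStarModuleRight.norm_sq_eq (A := A) (x := y)]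
    _ = (‖x‖ * ‖y‖) ^ 2 := by simp only [mul_pow]
  refine (pow_le_pow_iff_left₀ (norm_nonneg _) ?_ (by simp)).mp this
  exact mul_nonneg (norm_nonneg _) (norm_nonneg _)

section Helpers

variable {A : Type*} [CStarAlgebra A] [PartialOrder A] [StarOrderedRing A]
variable {H : Type*} [NormedAddCommGroup H] [NormedSpace ℂ H] [SMul Aᵐᵒᵖ H] [CStarModuleRight A H]

private lemma aux_zero_le_one : (0 : A) ≤ 1 := by
  simpa using star_mul_self_nonneg (1 : A)

private lemma aux_smul_one_mono {r s : ℝ} (h : r ≤ s) : r • (1 : A) ≤ s • 1 := by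
  have h0 : (0 : A) ≤ (s - r) • (1 : A) := smul_nonneg (by linarith) aux_zero_le_one
  rw [sub_smul] at h0
  exact sub_nonneg.mp h0

private lemma aux_conj (ε : ℝ) (hε : 0 < ε) (q : A) (hq : 0 ≤ q) :
    ∃ d : A, IsSelfAdjoint d ∧ d * (ε • 1 + q) * d = 1 ∧
      ∀ (p : A) (c : ℝ), d * p * d ≤ c • 1 → p ≤ c • (ε • 1 + q) := by
  have hqsa : IsSelfAdjoint q := .of_nonneg hq
  have hsp : ∀ t ∈ spectrum ℝ q, 0 < ε + t := fun t ht => by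
    have := spectrum_nonneg_of_nonneg hq ht; linarith
  have hcont_s : ContinuousOn (fun t : ℝ => Real.sqrt (ε + t)) (spectrum ℝ q) :=
    (Real.continuous_sqrt.comp (continuous_const.add continuous_id)).continuousOn
  have hcont_d : ContinuousOn (fun t : ℝ => (Real.sqrt (ε + t))⁻¹) (spectrum ℝ q) :=
    hcont_s.inv₀ (fun t ht => (Real.sqrt_pos.mpr (hsp t ht)).ne')
  set d := cfc (fun t : ℝ => (Real.sqrt (ε + t))⁻¹) q with hd
  set e := cfc (fun t : ℝ => Real.sqrt (ε + t)) q with he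
  have hεq : ε • (1 : A) + q = cfc (fun t : ℝ => ε + t) q := by
    rw [cfc_const_add ε (fun t : ℝ => t) q, cfc_id' ℝ q, Algebra.algebraMap_eq_smul_one]
  have hcont_sum : ContinuousOn (fun t : ℝ => ε + t) (spectrum ℝ q) :=
    (continuous_const.add continuous_id).continuousOn
  have hde : d * e = 1 := by
    rw [hd, he, ← cfc_mul _ _ q hcont_d hcont_s,
      cfc_congr (g := fun _ : ℝ => (1 : ℝ)) (fun t ht =>
        inv_mul_cancel₀ (Real.sqrt_pos.mpr (hsp t ht)).ne'),
      cfc_const (1 : ℝ) q, map_one]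
  have hed : e * d = 1 := by
    rw [hd, he, ← cfc_mul _ _ q hcont_s hcont_d,
      cfc_congr (g := fun _ : ℝ => (1 : ℝ)) (fun t ht =>
        mul_inv_cancel₀ (Real.sqrt_pos.mpr (hsp t ht)).ne'),
      cfc_const (1 : ℝ) q, map_one]
  have hee : e * e = ε • (1 : A) + q := by
    rw [hεq, he, ← cfc_mul _ _ q hcont_s hcont_s]
    exact cfc_congr (fun t ht => Real.mul_self_sqrt (hsp t ht).le)
  have hded : d * (ε • 1 + q) * d = 1 := by
    rw [hεq, hd, ← cfc_mul _ _ q hcont_d hcont_sum, ← cfc_mul (fun t : ℝ => (Real.sqrt (ε + t))⁻¹ * (ε + t)) _ q (hcont_d.mul hcont_sum) hcont_d,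
      cfc_congr (g := fun _ : ℝ => (1 : ℝ)) (fun t ht => by
        have h1 := (hsp t ht)
        have h2 := (Real.sqrt_pos.mpr h1).ne'
        field_simp
        rw [Real.sq_sqrt h1.le]),
      cfc_const (1 : ℝ) q, map_one]
  refine ⟨d, cfc_predicate _ q, hded, fun p c hpc => ?_⟩
  have hesa : IsSelfAdjoint e := cfc_predicate _ q
  have h2 := star_left_conjugate_le_conjugate hpc e
  rw [hesa.star_eq] at h2
  have h3 : e * (d * p * d) * e = p := by
    have : e * (d * p * d) * e = (e * d) * p * (d * e) := by
      simp only [mul_assoc]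
    rw [this, hed, hde, one_mul, mul_one]
  have h4 : e * (c • (1 : A)) * e = c • (e * e) := by
    simp [mul_smul_comm, smul_mul_assoc]
  rw [h3, h4, hee] at h2
  exact h2

private lemma aux_eps {p q : A} {c : ℝ} (h : ∀ ε : ℝ, 0 < ε → p ≤ c • (ε • 1 + q)) :
    p ≤ c • q := by
  have hcont : Continuous (fun ε : ℝ => c • (ε • (1 : A) + q)) := by fun_prop
  have ht : Filter.Tendsto (fun ε : ℝ => c • (ε • (1 : A) + q)) (nhdsWithin 0 (Set.Ioi 0))
      (nhds (c • q)) := by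
    have h0 := (hcont.tendsto 0).mono_left (nhdsWithin_le_nhds (s := Set.Ioi (0 : ℝ)))
    simpa using h0
  exact ge_of_tendsto ht (Filter.eventually_of_mem self_mem_nhdsWithin fun ε hε => h ε hε)

private lemma aux_alin (θ θad : H →L[ℂ] H)
    (hθad : ∀ x y : H, (inner A (θ x) y : A) = inner A x (θad y)) (x : H) (a : A) :
    θ (x <• a) = θ x <• a := by
  have hy : ∀ (y z : H), (inner A y (θ z) : A) = inner A (θad y) z := fun y z => by
    calc (inner A y (θ z) : A) = star (inner A (θ z) y : A) := (CStarModuleRight.star_inner _ _).symm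
      _ = star (inner A z (θad y) : A) := by rw [hθad]
      _ = inner A (θad y) z := CStarModuleRight.star_inner _ _
  have key : ∀ y : H, (inner A y (θ (x <• a) - θ x <• a) : A) = 0 := fun y => by
    rw [CStarModuleRight.inner_sub_right, hy, CStarModuleRight.inner_op_smul_right,
      CStarModuleRight.inner_op_smul_right, ← hy, sub_self]
  have h0 := key (θ (x <• a) - θ x <• a)
  rw [CStarModuleRight.inner_self] at h0
  exact sub_eq_zero.mp h0

private lemma aux_inner_smul (f : H) (d : A) (hdsa : IsSelfAdjoint d) :
    (inner A (f <• d) (f <• d) : A) = d * inner A f f * d := by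
  rw [CStarModuleRight.inner_op_smul_right, CStarModuleRight.inner_op_smul_left, hdsa.star_eq, mul_assoc]

private lemma aux_upper (θ : H →L[ℂ] H)
    (hlin : ∀ (x : H) (a : A), θ (x <• a) = θ x <• a) (f : H) :
    (inner A (θ f) (θ f) : A) ≤ (‖θ‖ ^ 2) • inner A f f := by
  rcases subsingleton_or_nontrivial A with hA | hA
  · exact le_of_eq (Subsingleton.elim _ _)
  apply aux_eps
  intro ε hε
  obtain ⟨d, hdsa, hded, himp⟩ := aux_conj ε hε (inner A f f) CStarModuleRight.inner_self_nonneg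
  apply himp
  set g := f <• d with hg
  have h1 : (inner A (θ g) (θ g) : A) = d * inner A (θ f) (θ f) * d := by
    rw [hg, hlin, aux_inner_smul _ _ hdsa]
  have hq_le : (inner A f f : A) ≤ ε • (1 : A) + inner A f f :=
    le_add_of_nonneg_left (smul_nonneg hε.le aux_zero_le_one)
  have hgle : (inner A g g : A) ≤ 1 := by
    rw [hg, aux_inner_smul _ _ hdsa, ← hded]
    calc d * (inner A f f : A) * d = star d * inner A f f * d := by rw [hdsa.star_eq]
      _ ≤ star d * (ε • (1 : A) + inner A f f) * d := star_left_conjugate_le_conjugate hq_le d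
      _ = d * (ε • (1 : A) + inner A f f) * d := by rw [hdsa.star_eq]
  have hgnorm : ‖g‖ ≤ 1 := by
    have h2 : ‖g‖ ^ 2 ≤ 1 := by
      rw [CStarModuleRight.norm_sq_eq (A := A)]
      calc ‖(inner A g g : A)‖ ≤ ‖(1 : A)‖ :=
            CStarAlgebra.norm_le_norm_of_nonneg_of_le CStarModuleRight.inner_self_nonneg hgle
        _ = 1 := norm_one
    nlinarith [norm_nonneg g]
  have hn : ‖(inner A (θ g) (θ g) : A)‖ ≤ ‖θ‖ ^ 2 := by
    rw [← CStarModuleRight.norm_sq_eq]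
    have h3 : ‖θ g‖ ≤ ‖θ‖ := by
      calc ‖θ g‖ ≤ ‖θ‖ * ‖g‖ := θ.le_opNorm g
        _ ≤ ‖θ‖ := by nlinarith [norm_nonneg θ]
    nlinarith [norm_nonneg (θ g)]
  calc d * (inner A (θ f) (θ f) : A) * d = inner A (θ g) (θ g) := h1.symm
    _ ≤ algebraMap ℝ A ‖(inner A (θ g) (θ g) : A)‖ :=
        (CStarModuleRight.isSelfAdjoint_inner_self).le_algebraMap_norm_self
    _ = ‖(inner A (θ g) (θ g) : A)‖ • 1 := Algebra.algebraMap_eq_smul_one _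
    _ ≤ (‖θ‖ ^ 2) • 1 := aux_smul_one_mono hn

private lemma aux_lower (θ θad N : H →L[ℂ] H)
    (hθad : ∀ x y : H, (inner A (θ x) y : A) = inner A x (θad y))
    (hlin : ∀ (x : H) (a : A), θ (x <• a) = θ x <• a)
    (hN₂ : (θad.comp θ).comp N = ContinuousLinearMap.id ℂ H) (f : H) :
    (inner A f f : A) ≤ ‖N‖ • inner A (θ f) (θ f) := by
  rcases subsingleton_or_nontrivial A with hA | hA
  · exact le_of_eq (Subsingleton.elim _ _)
  have hTsa : ∀ x y : H, (inner A (θad (θ x)) y : A) = inner A x (θad (θ y)) := fun x y => by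
    calc (inner A (θad (θ x)) y : A) = star (inner A y (θad (θ x)) : A) :=
          (CStarModuleRight.star_inner _ _).symm
      _ = star (inner A (θ y) (θ x) : A) := by rw [hθad]
      _ = inner A (θ x) (θ y) := CStarModuleRight.star_inner _ _
      _ = inner A x (θad (θ y)) := hθad _ _
  have hTN : ∀ x : H, θad (θ (N x)) = x := fun x => by
    have := congrArg (fun (T : H →L[ℂ] H) => T x) hN₂
    simpa using this
  apply aux_eps
  intro ε hε
  obtain ⟨d, hdsa, hded, himp⟩ :=
    aux_conj ε hε (inner A (θ f) (θ f)) CStarModuleRight.inner_self_nonneg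
  apply himp
  set g := f <• d with hg
  have hθg : (inner A (θ g) (θ g) : A) = d * inner A (θ f) (θ f) * d := by
    rw [hg, hlin, aux_inner_smul _ _ hdsa]
  set u : A := inner A g g with hu_def
  have husa : IsSelfAdjoint u := CStarModuleRight.isSelfAdjoint_inner_self
  have hun : (0 : A) ≤ u := CStarModuleRight.inner_self_nonneg
  have hu : (inner A (θ (N g)) (θ g) : A) = u := by
    rw [hθad, ← hTsa, hTN]
  have hu2 : (inner A (θ g) (θ (N g)) : A) = u := by
    have := congrArg star hu
    rwa [CStarModuleRight.star_inner, husa.star_eq] at this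
  have hvN : (inner A (θ (N g)) (θ (N g)) : A) = inner A (N g) g := by
    rw [hθad, hTN]
  have hCS := CStarModuleRight.inner_mul_inner_swap_le (A := A) (x := θ (N g)) (y := θ g)
  rw [hu2, hu] at hCS
  have hq_le : (inner A (θ f) (θ f) : A) ≤ ε • (1 : A) + inner A (θ f) (θ f) :=
    le_add_of_nonneg_left (smul_nonneg hε.le aux_zero_le_one)
  have hw1 : (inner A (θ g) (θ g) : A) ≤ 1 := by
    rw [hθg, ← hded]
    calc d * (inner A (θ f) (θ f) : A) * d = star d * inner A (θ f) (θ f) * d := by rw [hdsa.star_eq]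
      _ ≤ star d * (ε • (1 : A) + inner A (θ f) (θ f)) * d := star_left_conjugate_le_conjugate hq_le d
      _ = d * (ε • (1 : A) + inner A (θ f) (θ f)) * d := by rw [hdsa.star_eq]
  have hNg2 : ‖θ (N g)‖ ^ 2 ≤ ‖N‖ * ‖u‖ := by
    rw [CStarModuleRight.norm_sq_eq (A := A), hvN]
    calc ‖(inner A (N g) g : A)‖ ≤ ‖N g‖ * ‖g‖ := CStarModuleRight.norm_inner_le H
      _ ≤ (‖N‖ * ‖g‖) * ‖g‖ := by
          have := N.le_opNorm g
          have h0 : (0:ℝ) ≤ ‖g‖ := norm_nonneg g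
          nlinarith
      _ = ‖N‖ * ‖g‖ ^ 2 := by ring
      _ = ‖N‖ * ‖u‖ := by rw [CStarModuleRight.norm_sq_eq (A := A)]
  have huu : u * u ≤ (‖N‖ * ‖u‖) • 1 := by
    calc u * u ≤ ‖θ (N g)‖ ^ 2 • (inner A (θ g) (θ g) : A) := hCS
      _ ≤ ‖θ (N g)‖ ^ 2 • (1 : A) := smul_le_smul_of_nonneg_left hw1 (by positivity)
      _ ≤ (‖N‖ * ‖u‖) • 1 := aux_smul_one_mono hNg2
  have hnu : ‖u‖ ≤ ‖N‖ := by
    have h1 : ‖u * u‖ ≤ ‖(‖N‖ * ‖u‖) • (1 : A)‖ := by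
      refine CStarAlgebra.norm_le_norm_of_nonneg_of_le ?_ huu
      have := star_mul_self_nonneg u
      rwa [husa.star_eq] at this
    rw [norm_smul, norm_one, mul_one] at h1
    have h2 : ‖u * u‖ = ‖u‖ * ‖u‖ := by
      nth_rewrite 1 [← husa.star_eq]
      exact CStarRing.norm_star_mul_self (x := u)
    have h3 : ‖(‖N‖ * ‖u‖ : ℝ)‖ = ‖N‖ * ‖u‖ := by
      rw [Real.norm_eq_abs, abs_of_nonneg (by positivity)]
    rw [h2, h3] at h1
    rcases (norm_nonneg u).eq_or_lt with h | h
    · rw [← h]; exact norm_nonneg N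
    · nlinarith
  calc d * (inner A f f : A) * d = u := by
        rw [hu_def, hg]; exact (aux_inner_smul f d hdsa).symm
    _ ≤ algebraMap ℝ A ‖u‖ := husa.le_algebraMap_norm_self
    _ = ‖u‖ • 1 := Algebra.algebraMap_eq_smul_one _
    _ ≤ ‖N‖ • 1 := aux_smul_one_mono hnu
end Helpers


/-- if `Λ_{CC'}` is a `(C,C')`-controlled g-fusion frame with bounds
`A, B` and `θ` is injective with closed range, commuting with `C`, `C'` and all
`P_{W_j}`, then `{W_j, Λ_jθ, v_j}` is a `(C,C')`-controlled g-fusion frame with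
bounds `A‖(θ*θ)⁻¹‖⁻¹` and `B‖θ‖²`. -/
theorem controlled_g_fusion_frame_comp_right
    (C C' : H →L[ℂ] H) (P : J → H →L[ℂ] H) (Λ : ∀ j, H →L[ℂ] Hs j)
    (Λad : ∀ j, Hs j →L[ℂ] H) (v : J → A)
    (hΛad : ∀ (j) (x : H) (u : Hs j), (inner A (Λ j x) u : A) = inner A x (Λad j u))
    (hP_idem : ∀ j, (P j).comp (P j) = P j)
    (hP_sa : ∀ (j) (f g : H), (inner A (P j f) g : A) = inner A f (P j g))
    (hC_sa : ∀ f g : H, (inner A (C f) g : A) = inner A f (C g))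
    (hC'_sa : ∀ f g : H, (inner A (C' f) g : A) = inner A f (C' g))
    (hC_pos : ∀ f : H, 0 ≤ (inner A (C f) f : A))
    (hC'_pos : ∀ f : H, 0 ≤ (inner A (C' f) f : A))
    (hC_inv : Function.Bijective C) (hC'_inv : Function.Bijective C')
    (hCC' : C.comp C' = C'.comp C)
    (hCT : ∀ j, C.comp ((P j).comp ((Λad j).comp ((Λ j).comp (P j))))
      = ((P j).comp ((Λad j).comp ((Λ j).comp (P j)))).comp C)
    (hC'T : ∀ j, C'.comp ((P j).comp ((Λad j).comp ((Λ j).comp (P j))))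
      = ((P j).comp ((Λad j).comp ((Λ j).comp (P j)))).comp C')
    (hv_pos : ∀ j, 0 ≤ v j) (hv_inv : ∀ j, IsUnit (v j))
    (hv_central : ∀ (j) (a : A), Commute (v j) a)
    (a b : ℝ) (ha : 0 < a) (hab : a ≤ b)
    (hsum : ∀ f : H, Summable fun j =>
      v j * v j * (inner A (Λ j (P j (C f))) (Λ j (P j (C' f))) : A))
    (hframe : ∀ f : H,
      a • (inner A f f : A) ≤
        (∑' j, v j * v j * (inner A (Λ j (P j (C f))) (Λ j (P j (C' f))) : A)) ∧
      (∑' j, v j * v j * (inner A (Λ j (P j (C f))) (Λ j (P j (C' f))) : A)) ≤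
        b • (inner A f f : A))
    (θ θad : H →L[ℂ] H)
    (hθad : ∀ x y : H, (inner A (θ x) y : A) = inner A x (θad y))
    (hθ_inj : Function.Injective θ) (hθ_range : IsClosed (Set.range θ))
    (hθC : θ.comp C = C.comp θ) (hθC' : θ.comp C' = C'.comp θ)
    (hθP : ∀ j, θ.comp (P j) = (P j).comp θ)
    (N : H →L[ℂ] H) (hN₁ : N.comp (θad.comp θ) = ContinuousLinearMap.id ℂ H)
    (hN₂ : (θad.comp θ).comp N = ContinuousLinearMap.id ℂ H) :
    ∀ f : H,
      Summable (fun j =>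
        v j * v j * (inner A (Λ j (θ (P j (C f)))) (Λ j (θ (P j (C' f)))) : A)) ∧
      (a * ‖N‖⁻¹) • (inner A f f : A) ≤
        (∑' j, v j * v j * (inner A (Λ j (θ (P j (C f)))) (Λ j (θ (P j (C' f)))) : A)) ∧
      (∑' j, v j * v j * (inner A (Λ j (θ (P j (C f)))) (Λ j (θ (P j (C' f)))) : A)) ≤
        (b * ‖θ‖ ^ 2) • (inner A f f : A) := by
  intro f
  have hlin := aux_alin θ θad hθad
  have hrw : ∀ j, θ (P j (C f)) = P j (C (θ f)) := fun j => by
    have h1 := congrArg (fun (T : H →L[ℂ] H) => T (C f)) (hθP j)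
    have h2 := congrArg (fun (T : H →L[ℂ] H) => T f) hθC
    simp only [ContinuousLinearMap.comp_apply] at h1 h2
    rw [h1, h2]
  have hrw' : ∀ j, θ (P j (C' f)) = P j (C' (θ f)) := fun j => by
    have h1 := congrArg (fun (T : H →L[ℂ] H) => T (C' f)) (hθP j)
    have h2 := congrArg (fun (T : H →L[ℂ] H) => T f) hθC'
    simp only [ContinuousLinearMap.comp_apply] at h1 h2
    rw [h1, h2]
  have hfun : (fun j => v j * v j * (inner A (Λ j (θ (P j (C f)))) (Λ j (θ (P j (C' f)))) : A))
      = fun j => v j * v j * (inner A (Λ j (P j (C (θ f)))) (Λ j (P j (C' (θ f)))) : A) := by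
    funext j; rw [hrw j, hrw' j]
  refine ⟨by rw [hfun]; exact hsum (θ f), ?_, ?_⟩
  · rw [hfun]
    have hlow := aux_lower θ θad N hθad hlin hN₂ f
    have hS := (hframe (θ f)).1
    rcases eq_or_lt_of_le (norm_nonneg N) with hN0 | hN0
    · have hle0 : (inner A f f : A) ≤ 0 := by rw [← hN0, zero_smul] at hlow; exact hlow
      have hff : (inner A f f : A) = 0 := le_antisymm hle0 CStarModuleRight.inner_self_nonneg
      rw [hff, smul_zero]
      exact le_trans (smul_nonneg ha.le CStarModuleRight.inner_self_nonneg) hS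
    · calc (a * ‖N‖⁻¹) • (inner A f f : A)
          ≤ (a * ‖N‖⁻¹) • (‖N‖ • (inner A (θ f) (θ f) : A)) :=
            smul_le_smul_of_nonneg_left hlow (by positivity)
        _ = a • (inner A (θ f) (θ f) : A) := by
            rw [smul_smul]; congr 1; field_simp
        _ ≤ _ := hS
  · rw [hfun]
    have hup := aux_upper θ hlin f
    have hS := (hframe (θ f)).2
    calc _ ≤ b • (inner A (θ f) (θ f) : A) := hS
      _ ≤ b • ((‖θ‖ ^ 2) • (inner A f f : A)) := smul_le_smul_of_nonneg_left hup (by linarith)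
      _ = (b * ‖θ‖ ^ 2) • (inner A f f : A) := by rw [smul_smul]
end
end

section
/- Let Λ_{CC'} = {W_j, Λ_j, v_j} be a (C,C')-controlled g-fusion frame for H with bounds A, B, and θ ∈ End*_A(L,H) injective with closed range such that θ commutes with Λ_j P_{W_j} C and Λ_j P_{W_j} C' for all j. Then {W_j, θΛ_j, v_j} is a (C,C')-controlled g-fusion frame with bounds A‖(θ*θ)⁻¹‖⁻¹ and B‖θ‖². -/
open scoped RightActions

noncomputable section

/-- The class `CStarModule` as it stood in Mathlib of December 2024: a Hilbert C⋆-module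
with a *right* action of `A` and an `A`-valued inner product that is linear in the second
argument. (Mathlib's present `CStarModule` uses a left action instead.) -/
class RightCStarModule (A : outParam <| Type*) (E : Type*) [NonUnitalSemiring A] [StarRing A]
    [Module ℂ A] [AddCommGroup E] [Module ℂ E] [PartialOrder A] [SMul Aᵐᵒᵖ E] [Norm A] [Norm E]
    extends Inner A E where
  inner_add_right {x} {y} {z} : inner x (y + z) = inner x y + inner x z
  inner_self_nonneg {x} : 0 ≤ inner x x
  inner_self {x} : inner x x = 0 ↔ x = 0
  inner_op_smul_right {a : A} {x y : E} : inner x (y <• a) = inner x y * a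
  inner_smul_right_complex {z : ℂ} {x} {y} : inner x (z • y) = z • inner x y
  star_inner x y : star (inner x y) = inner y x
  norm_eq_sqrt_norm_inner_self x : ‖x‖ = √‖inner x x‖

section
namespace ControlledGFusionAux

variable {A : Type*} [CStarAlgebra A] [PartialOrder A] [StarOrderedRing A]
variable {H : Type*} [NormedAddCommGroup H] [NormedSpace ℂ H] [SMul Aᵐᵒᵖ H] [RightCStarModule A H]

local notation "⟪" x ", " y "⟫" => (inner A x y : A)

def rc_innerAdd (x : H) : H →+ A :=
  AddMonoidHom.mk' (fun y => ⟪x, y⟫) fun _ _ => RightCStarModule.inner_add_right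

lemma rc_inner_sub_right {x y z : H} : ⟪x, y - z⟫ = ⟪x, y⟫ - ⟪x, z⟫ := map_sub (rc_innerAdd x) y z

lemma rc_inner_zero_right {x : H} : ⟪x, 0⟫ = 0 := map_zero (rc_innerAdd x)

lemma rc_inner_zero_left {x : H} : ⟪0, x⟫ = 0 := by
  rw [← RightCStarModule.star_inner, rc_inner_zero_right, star_zero]

lemma rc_inner_sub_left {x y z : H} : ⟪x - y, z⟫ = ⟪x, z⟫ - ⟪y, z⟫ := by
  rw [← RightCStarModule.star_inner, rc_inner_sub_right, star_sub, RightCStarModule.star_inner,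
    RightCStarModule.star_inner]

lemma rc_inner_op_smul_left {a : A} {x y : H} : ⟪x <• a, y⟫ = star a * ⟪x, y⟫ := by
  rw [← RightCStarModule.star_inner, RightCStarModule.inner_op_smul_right, star_mul,
    RightCStarModule.star_inner]

lemma rc_inner_smul_right_real {r : ℝ} {x y : H} : ⟪x, r • y⟫ = r • ⟪x, y⟫ := by
  have h₁ : r • y = (r : ℂ) • y := by simp
  rw [h₁, RightCStarModule.inner_smul_right_complex]
  simp

lemma rc_inner_smul_left_real {r : ℝ} {x y : H} : ⟪r • x, y⟫ = r • ⟪x, y⟫ := by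
  rw [← RightCStarModule.star_inner, rc_inner_smul_right_real, star_smul, star_trivial,
    RightCStarModule.star_inner]

lemma rc_norm_sq_eq {x : H} : ‖x‖ ^ 2 = ‖⟪x, x⟫‖ := by
  rw [RightCStarModule.norm_eq_sqrt_norm_inner_self (A := A) x, Real.sq_sqrt (norm_nonneg _)]

lemma rc_isSelfAdjoint_inner_self {x : H} : IsSelfAdjoint ⟪x, x⟫ :=
  RightCStarModule.star_inner x x

lemma rc_norm_inner_le {x y : H} : ‖⟪x, y⟫‖ ≤ ‖x‖ * ‖y‖ := by
  rcases eq_or_ne x 0 with hx | hx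
  · rw [hx, rc_inner_zero_left, norm_zero]; positivity
  have hr : 0 < ‖x‖ ^ 2 := by have := norm_pos_iff.mpr hx; positivity
  set r : ℝ := ‖x‖ ^ 2 with hr_def
  have hxx : ‖⟪x, x⟫‖ = r := rc_norm_sq_eq.symm
  have h0 : (0:A) ≤ ⟪x <• ⟪x, y⟫ - r • y, x <• ⟪x, y⟫ - r • y⟫ :=
    RightCStarModule.inner_self_nonneg
  have hexp : ⟪x <• ⟪x, y⟫ - r • y, x <• ⟪x, y⟫ - r • y⟫ = ⟪y, x⟫ * (⟪x, x⟫ * ⟪x, y⟫)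
      - r • (⟪y, x⟫ * ⟪x, y⟫) - r • (⟪y, x⟫ * ⟪x, y⟫) + r • (r • ⟪y, y⟫) := by
    simp only [rc_inner_sub_left, rc_inner_sub_right, rc_inner_op_smul_left,
      RightCStarModule.inner_op_smul_right, rc_inner_smul_left_real, rc_inner_smul_right_real,
      RightCStarModule.star_inner, mul_sub, sub_mul, smul_sub, mul_smul_comm, smul_mul_assoc, mul_assoc]
    abel
  have hE : ⟪y, x⟫ * (⟪x, x⟫ * ⟪x, y⟫) ≤ r • (⟪y, x⟫ * ⟪x, y⟫) := by
    have := CStarAlgebra.star_left_conjugate_le_norm_smul (a := ⟪x, y⟫) (b := ⟪x, x⟫)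
      rc_isSelfAdjoint_inner_self
    rwa [RightCStarModule.star_inner, hxx, mul_assoc] at this
  rw [hexp] at h0
  have h3 : ⟪y, x⟫ * ⟪x, y⟫ ≤ r • ⟪y, y⟫ := by
    have h5 : ⟪y, x⟫ * (⟪x, x⟫ * ⟪x, y⟫) - r • (⟪y, x⟫ * ⟪x, y⟫) - r • (⟪y, x⟫ * ⟪x, y⟫)
        + r • (r • ⟪y, y⟫) ≤ r • (⟪y, x⟫ * ⟪x, y⟫) - r • (⟪y, x⟫ * ⟪x, y⟫)
        - r • (⟪y, x⟫ * ⟪x, y⟫) + r • (r • ⟪y, y⟫) := by gcongr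
    have h6 := h0.trans h5
    rw [sub_self, zero_sub, neg_add_eq_sub, sub_nonneg] at h6
    exact (smul_le_smul_iff_of_pos_left hr).mp h6
  have h7 : ‖⟪x, y⟫‖ ^ 2 ≤ (‖x‖ * ‖y‖) ^ 2 := by
    calc ‖⟪x, y⟫‖ ^ 2 = ‖⟪y, x⟫ * ⟪x, y⟫‖ := by
          rw [← RightCStarModule.star_inner x y, CStarRing.norm_star_mul_self, pow_two]
      _ ≤ ‖r • ⟪y, y⟫‖ := by
          refine CStarAlgebra.norm_le_norm_of_nonneg_of_le ?_ h3
          rw [← RightCStarModule.star_inner x y]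
          exact star_mul_self_nonneg _
      _ = r * ‖⟪y, y⟫‖ := by rw [norm_smul, Real.norm_of_nonneg hr.le]
      _ = (‖x‖ * ‖y‖) ^ 2 := by rw [← rc_norm_sq_eq, hr_def, mul_pow]
  exact (pow_le_pow_iff_left₀ (norm_nonneg _) (by positivity) two_ne_zero).mp h7

lemma inner_ext {z w : H} (h : ∀ y : H, ⟪y, z⟫ = ⟪y, w⟫) : z = w := by
  have h2 : ⟪z - w, z - w⟫ = 0 := by
    rw [rc_inner_sub_right, h (z - w), sub_self]
  exact sub_eq_zero.mp (RightCStarModule.inner_self.mp h2)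

lemma op_smul_op_smul (x : H) (a a' : A) : (x <• a) <• a' = x <• (a * a') :=
  inner_ext fun y => by
    rw [RightCStarModule.inner_op_smul_right, RightCStarModule.inner_op_smul_right,
      RightCStarModule.inner_op_smul_right, mul_assoc]

lemma op_smul_one (x : H) : x <• (1 : A) = x :=
  inner_ext fun y => by rw [RightCStarModule.inner_op_smul_right, mul_one]

lemma adj_apply' {T Tad : H →L[ℂ] H} (h : ∀ x y : H, ⟪T x, y⟫ = ⟪x, Tad y⟫)
    (y z : H) : ⟪y, T z⟫ = ⟪Tad y, z⟫ := by
  have := congrArg star (h z y)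
  simpa [RightCStarModule.star_inner] using this

lemma adj_linear {T Tad : H →L[ℂ] H} (h : ∀ x y : H, ⟪T x, y⟫ = ⟪x, Tad y⟫)
    (x : H) (a : A) : T (x <• a) = (T x) <• a := by
  refine inner_ext fun y => ?_
  rw [adj_apply' h y (x <• a), RightCStarModule.inner_op_smul_right,
    RightCStarModule.inner_op_smul_right, ← adj_apply' h y x]

lemma eps_le {x y : A} (h : ∀ ε : ℝ, 0 < ε → x ≤ y + ε • 1) : x ≤ y := by
  have lim : Filter.Tendsto (fun ε : ℝ => y + ε • (1:A)) (nhdsWithin 0 (Set.Ioi 0)) (nhds y) := by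
    have : Filter.Tendsto (fun ε : ℝ => y + ε • (1:A)) (nhds 0) (nhds (y + (0:ℝ) • 1)) :=
      (continuous_const.add (continuous_id.smul continuous_const)).tendsto 0
    simpa using this.mono_left nhdsWithin_le_nhds
  exact ge_of_tendsto lim (eventually_mem_nhdsWithin.mono fun ε hε => h ε hε)

lemma smul_one_nonneg {r : ℝ} (hr : 0 ≤ r) : (0 : A) ≤ r • 1 :=
  smul_nonneg hr zero_le_one

lemma smul_one_le_smul_one {r r' : ℝ} (h : r ≤ r') : (r • 1 : A) ≤ r' • 1 := by
  have : (0 : A) ≤ (r' - r) • 1 := smul_one_nonneg (by linarith)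
  rw [sub_smul] at this
  exact sub_nonneg.mp this

lemma norm_one_le' : ‖(1:A)‖ ≤ 1 := by
  rcases subsingleton_or_nontrivial A with h|h
  · rw [Subsingleton.elim (1:A) 0, norm_zero]; norm_num
  · exact le_of_eq norm_one

lemma conj_setup (c : A) (hc : 0 ≤ c) (ε : ℝ) (hε : 0 < ε) :
    ∃ s b : A, star s = s ∧ star b = b ∧ s * s = c + ε • 1 ∧ b * s = 1 ∧ s * b = 1 := by
  set a : A := c + ε • 1 with ha_def
  have hε1 : (0:A) ≤ ε • 1 := smul_one_nonneg hε.le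
  have ha : 0 ≤ a := add_nonneg hc hε1
  have hunit : IsUnit a := by
    refine CStarAlgebra.isUnit_of_le _ (le_add_of_nonneg_left hc) ?_
    have : (ε • 1 : A) = algebraMap ℝ A ε := (Algebra.algebraMap_eq_smul_one ε).symm
    rw [this]
    exact isStrictlyPositive_algebraMap hε
  set s : A := CFC.sqrt a with hs_def
  have hs : s * s = a := CFC.sqrt_mul_sqrt_self a ha
  have hsnn : 0 ≤ s := CFC.sqrt_nonneg a
  have hss : star s = s := (IsSelfAdjoint.of_nonneg hsnn).star_eq
  obtain ⟨u, hu⟩ := hunit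
  have hsa : Commute s a := by
    rw [← hs]; exact (Commute.refl s).mul_right (Commute.refl s)
  have hcomm : Commute s (↑u⁻¹ : A) := by
    rw [← hu] at hsa
    exact hsa.units_inv_right
  have hstaru : star (↑u⁻¹ : A) = ↑u⁻¹ := by
    have hsa' : star a = a := (IsSelfAdjoint.of_nonneg ha).star_eq
    have h1 : star (↑u⁻¹ : A) * a = 1 := by
      rw [← hsa']
      calc star (↑u⁻¹ : A) * star a = star (a * ↑u⁻¹) := (star_mul _ _).symm
        _ = star (1 : A) := by rw [← hu, Units.mul_inv]
        _ = 1 := star_one A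
    calc star (↑u⁻¹ : A) = star (↑u⁻¹ : A) * (a * ↑u⁻¹) := by rw [← hu, Units.mul_inv, mul_one]
      _ = (star (↑u⁻¹ : A) * a) * ↑u⁻¹ := by rw [mul_assoc]
      _ = ↑u⁻¹ := by rw [h1, one_mul]
  refine ⟨s, ↑u⁻¹ * s, hss, ?_, hs, ?_, ?_⟩
  · rw [star_mul, hss, hstaru, hcomm.eq]
  · rw [mul_assoc, hs, ← hu, Units.inv_mul]
  · rw [← mul_assoc, hcomm.eq, mul_assoc, hs, ← hu, Units.inv_mul]


lemma adj_bound {T Tad : H →L[ℂ] H} (h : ∀ x y : H, ⟪T x, y⟫ = ⟪x, Tad y⟫) (f : H) :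
    ⟪T f, T f⟫ ≤ (‖T‖ ^ 2) • ⟪f, f⟫ := by
  refine eps_le fun ε' hε' => ?_
  have hd : (0:ℝ) < ‖T‖ ^ 2 + 1 := by positivity
  set ε : ℝ := ε' / (‖T‖ ^ 2 + 1) with hε_def
  have hε : 0 < ε := div_pos hε' hd
  obtain ⟨s, b, hss, hbb, hsq, hbs, hsb⟩ :=
    conj_setup (⟪f, f⟫) RightCStarModule.inner_self_nonneg ε hε
  set g : H := f <• b with hg_def
  have hfg : f = g <• s := by rw [hg_def, op_smul_op_smul, hbs, op_smul_one]
  have hgg : ⟪g, g⟫ ≤ 1 := by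
    have h1 : ⟪g, g⟫ = star b * ⟪f, f⟫ * b := by
      rw [hg_def, RightCStarModule.inner_op_smul_right, rc_inner_op_smul_left, mul_assoc]
    calc ⟪g, g⟫ = star b * ⟪f, f⟫ * b := h1
      _ ≤ star b * (⟪f, f⟫ + ε • 1) * b :=
        star_left_conjugate_le_conjugate (le_add_of_nonneg_right (smul_one_nonneg hε.le)) b
      _ = (b * s) * (s * b) := by rw [hbb, ← hsq]; noncomm_ring
      _ = 1 := by rw [hbs, hsb, one_mul]
  have hggn : ‖⟪g, g⟫‖ ≤ 1 := by
    calc ‖⟪g, g⟫‖ ≤ ‖(1:A)‖ :=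
          CStarAlgebra.norm_le_norm_of_nonneg_of_le RightCStarModule.inner_self_nonneg hgg
      _ ≤ 1 := norm_one_le'
  have hgnorm : ‖g‖ ≤ 1 := by
    have h2 : ‖g‖ ^ 2 = ‖⟪g, g⟫‖ := rc_norm_sq_eq
    nlinarith [norm_nonneg g]
  have hTg : ‖T g‖ ≤ ‖T‖ := by
    calc ‖T g‖ ≤ ‖T‖ * ‖g‖ := T.le_opNorm g
      _ ≤ ‖T‖ * 1 := by gcongr
      _ = ‖T‖ := mul_one _
  have hTf : T f = (T g) <• s := by
    conv_lhs => rw [hfg]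
    rw [adj_linear h]
  calc ⟪T f, T f⟫ = star s * ⟪T g, T g⟫ * s := by
        rw [hTf, RightCStarModule.inner_op_smul_right, rc_inner_op_smul_left, mul_assoc]
    _ ≤ ‖⟪T g, T g⟫‖ • (star s * s) :=
        CStarAlgebra.star_left_conjugate_le_norm_smul rc_isSelfAdjoint_inner_self
    _ ≤ (‖T‖ ^ 2) • (star s * s) := by
        refine smul_le_smul_of_nonneg_right ?_ ?_
        · calc ‖⟪T g, T g⟫‖ = ‖T g‖ ^ 2 := rc_norm_sq_eq.symm
            _ ≤ ‖T‖ ^ 2 := by gcongr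
        · exact star_mul_self_nonneg s
    _ = (‖T‖ ^ 2) • ⟪f, f⟫ + (‖T‖ ^ 2 * ε) • 1 := by
        rw [hss, hsq, smul_add, smul_smul]
    _ ≤ (‖T‖ ^ 2) • ⟪f, f⟫ + ε' • 1 := by
        refine add_le_add_right (smul_one_le_smul_one ?_) _
        calc ‖T‖ ^ 2 * ε ≤ (‖T‖ ^ 2 + 1) * ε := by nlinarith [hε]
          _ = ε' := by rw [hε_def]; field_simp

lemma inv_bound {T Tad N : H →L[ℂ] H} (h : ∀ x y : H, ⟪T x, y⟫ = ⟪x, Tad y⟫)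
    (hN₁ : ∀ x : H, N (Tad (T x)) = x) (hN₂ : ∀ x : H, Tad (T (N x)) = x) (f : H) :
    ⟪f, f⟫ ≤ ‖N‖ • ⟪T f, T f⟫ := by
  have hM : ∀ x y : H, ⟪x, Tad (T y)⟫ = ⟪T x, T y⟫ := fun x y => (h x (T y)).symm
  have hTadl : ∀ u z : H, ⟪Tad u, z⟫ = ⟪u, T z⟫ := fun u z => (adj_apply' h u z).symm
  refine eps_le fun ε' hε' => ?_
  have hd : (0:ℝ) < ‖N‖ + 1 := by positivity
  set ε : ℝ := ε' / (‖N‖ + 1) with hε_def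
  have hε : 0 < ε := div_pos hε' hd
  obtain ⟨s, b, hss, hbb, hsq, hbs, hsb⟩ :=
    conj_setup (⟪T f, T f⟫) RightCStarModule.inner_self_nonneg ε hε
  set g : H := f <• b with hg_def
  have hfg : f = g <• s := by rw [hg_def, op_smul_op_smul, hbs, op_smul_one]
  have hTg : T g = (T f) <• b := by rw [hg_def, adj_linear h]
  have h1 : ⟪T g, T g⟫ ≤ 1 := by
    calc ⟪T g, T g⟫ = star b * ⟪T f, T f⟫ * b := by
          rw [hTg, RightCStarModule.inner_op_smul_right, rc_inner_op_smul_left, mul_assoc]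
      _ ≤ star b * (⟪T f, T f⟫ + ε • 1) * b :=
        star_left_conjugate_le_conjugate (le_add_of_nonneg_right (smul_one_nonneg hε.le)) b
      _ = (b * s) * (s * b) := by rw [hbb, ← hsq]; noncomm_ring
      _ = 1 := by rw [hbs, hsb, one_mul]
  have h1n : ‖⟪T g, T g⟫‖ ≤ 1 := by
    calc ‖⟪T g, T g⟫‖ ≤ ‖(1:A)‖ :=
          CStarAlgebra.norm_le_norm_of_nonneg_of_le RightCStarModule.inner_self_nonneg h1
      _ ≤ 1 := norm_one_le'
  have hTgn : ‖T g‖ ≤ 1 := by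
    have h2 : ‖T g‖ ^ 2 = ‖⟪T g, T g⟫‖ := rc_norm_sq_eq
    nlinarith [norm_nonneg (T g)]
  -- N is self-adjoint
  have hNsa : ∀ x y : H, ⟪N x, y⟫ = ⟪x, N y⟫ := by
    intro x y
    have e1 : ⟪N x, y⟫ = ⟪T (N x), T (N y)⟫ := by
      conv_lhs => rw [← hN₂ y]
      rw [hM]
    have e2 : ⟪x, N y⟫ = ⟪T (N x), T (N y)⟫ := by
      conv_lhs => rw [← hN₂ x]
      rw [hTadl]
    rw [e1, e2]
  have hinner_eq : ⟪g, g⟫ = ⟪T g, T (N g)⟫ := by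
    have e0 : ⟪N (Tad (T g)), g⟫ = ⟪T g, T (N g)⟫ := by rw [hNsa, hTadl]
    rw [← e0, hN₁ g]
  have hθNg_sq : ‖T (N g)‖ ^ 2 ≤ ‖N‖ * ‖g‖ ^ 2 := by
    have e3 : ⟪T (N g), T (N g)⟫ = ⟪N g, g⟫ := by
      rw [← hM, hN₂ g]
    calc ‖T (N g)‖ ^ 2 = ‖⟪T (N g), T (N g)⟫‖ := rc_norm_sq_eq
      _ = ‖⟪N g, g⟫‖ := by rw [e3]
      _ ≤ ‖N g‖ * ‖g‖ := rc_norm_inner_le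
      _ ≤ (‖N‖ * ‖g‖) * ‖g‖ := by
          have := N.le_opNorm g
          nlinarith [norm_nonneg g]
      _ = ‖N‖ * ‖g‖ ^ 2 := by ring
  have hggn : ‖⟪g, g⟫‖ ≤ ‖N‖ := by
    have h2 : ‖g‖ ^ 2 = ‖⟪g, g⟫‖ := rc_norm_sq_eq
    have h3 : ‖⟪g, g⟫‖ ≤ ‖T g‖ * ‖T (N g)‖ := by
      rw [hinner_eq]; exact rc_norm_inner_le
    rcases (norm_nonneg (inner A g g : A)).eq_or_lt with hx0 | hx0
    · rw [← hx0]; exact norm_nonneg N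
    · have c1 : ‖⟪g, g⟫‖ ≤ ‖T (N g)‖ := by
        nlinarith [norm_nonneg (T (N g)), hTgn, h3, norm_nonneg (T g)]
      have c2 : ‖⟪g, g⟫‖ ^ 2 ≤ ‖N‖ * ‖⟪g, g⟫‖ := by
        nlinarith [c1, hθNg_sq, h2, norm_nonneg (inner A g g : A), norm_nonneg (T (N g))]
      nlinarith [c2, hx0]
  calc ⟪f, f⟫ = star s * ⟪g, g⟫ * s := by
        conv_lhs => rw [hfg]
        rw [RightCStarModule.inner_op_smul_right, rc_inner_op_smul_left, mul_assoc]
    _ ≤ ‖⟪g, g⟫‖ • (star s * s) :=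
        CStarAlgebra.star_left_conjugate_le_norm_smul rc_isSelfAdjoint_inner_self
    _ ≤ ‖N‖ • (star s * s) :=
        smul_le_smul_of_nonneg_right hggn (star_mul_self_nonneg s)
    _ = ‖N‖ • ⟪T f, T f⟫ + (‖N‖ * ε) • 1 := by
        rw [hss, hsq, smul_add, smul_smul]
    _ ≤ ‖N‖ • ⟪T f, T f⟫ + ε' • 1 := by
        refine add_le_add_right (smul_one_le_smul_one ?_) _
        calc ‖N‖ * ε ≤ (‖N‖ + 1) * ε := by nlinarith [hε]
          _ = ε' := by rw [hε_def]; field_simp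

end ControlledGFusionAux
end

variable {A : Type*} [CStarAlgebra A] [PartialOrder A] [StarOrderedRing A]
variable {H : Type*} [NormedAddCommGroup H] [NormedSpace ℂ H] [SMul Aᵐᵒᵖ H] [RightCStarModule A H]
variable {J : Type*} {Hs : J → Type*} [∀ j, NormedAddCommGroup (Hs j)]
  [∀ j, NormedSpace ℂ (Hs j)] [∀ j, SMul Aᵐᵒᵖ (Hs j)] [∀ j, RightCStarModule A (Hs j)]

/-- if `Λ_{CC'}` is a `(C,C')`-controlled g-fusion frame with bounds
`A, B` and `θ` is injective with closed range and commutes with each `Λ_jP_{W_j}C`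
and `Λ_jP_{W_j}C'`, then `{W_j, θΛ_j, v_j}` is a `(C,C')`-controlled g-fusion frame
with bounds `A‖(θ*θ)⁻¹‖⁻¹` and `B‖θ‖²`. -/
theorem controlled_g_fusion_frame_comp_left
    (C C' : H →L[ℂ] H) (P : J → H →L[ℂ] H) (Λ : J → H →L[ℂ] H)
    (Λad : J → H →L[ℂ] H) (v : J → A)
    (hΛad : ∀ (j) (x u : H), (inner A (Λ j x) u : A) = inner A x (Λad j u))
    (hP_idem : ∀ j, (P j).comp (P j) = P j)
    (hP_sa : ∀ (j) (f g : H), (inner A (P j f) g : A) = inner A f (P j g))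
    (hC_sa : ∀ f g : H, (inner A (C f) g : A) = inner A f (C g))
    (hC'_sa : ∀ f g : H, (inner A (C' f) g : A) = inner A f (C' g))
    (hC_pos : ∀ f : H, 0 ≤ (inner A (C f) f : A))
    (hC'_pos : ∀ f : H, 0 ≤ (inner A (C' f) f : A))
    (hC_inv : Function.Bijective C) (hC'_inv : Function.Bijective C')
    (hCC' : C.comp C' = C'.comp C)
    (hCT : ∀ j, C.comp ((P j).comp ((Λad j).comp ((Λ j).comp (P j))))
      = ((P j).comp ((Λad j).comp ((Λ j).comp (P j)))).comp C)
    (hC'T : ∀ j, C'.comp ((P j).comp ((Λad j).comp ((Λ j).comp (P j))))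
      = ((P j).comp ((Λad j).comp ((Λ j).comp (P j)))).comp C')
    (hv_pos : ∀ j, 0 ≤ v j) (hv_inv : ∀ j, IsUnit (v j))
    (hv_central : ∀ (j) (a : A), Commute (v j) a)
    (a b : ℝ) (ha : 0 < a) (hab : a ≤ b)
    (hsum : ∀ f : H, Summable fun j =>
      v j * v j * (inner A (Λ j (P j (C f))) (Λ j (P j (C' f))) : A))
    (hframe : ∀ f : H,
      a • (inner A f f : A) ≤
        (∑' j, v j * v j * (inner A (Λ j (P j (C f))) (Λ j (P j (C' f))) : A)) ∧
      (∑' j, v j * v j * (inner A (Λ j (P j (C f))) (Λ j (P j (C' f))) : A)) ≤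
        b • (inner A f f : A))
    (θ θad : H →L[ℂ] H)
    (hθad : ∀ x y : H, (inner A (θ x) y : A) = inner A x (θad y))
    (hθ_inj : Function.Injective θ) (hθ_range : IsClosed (Set.range θ))
    (hθΛC : ∀ j, θ.comp ((Λ j).comp ((P j).comp C)) = ((Λ j).comp ((P j).comp C)).comp θ)
    (hθΛC' : ∀ j, θ.comp ((Λ j).comp ((P j).comp C')) = ((Λ j).comp ((P j).comp C')).comp θ)
    (N : H →L[ℂ] H) (hN₁ : N.comp (θad.comp θ) = ContinuousLinearMap.id ℂ H)
    (hN₂ : (θad.comp θ).comp N = ContinuousLinearMap.id ℂ H) :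
    ∀ f : H,
      Summable (fun j =>
        v j * v j * (inner A (θ (Λ j (P j (C f)))) (θ (Λ j (P j (C' f)))) : A)) ∧
      (a * ‖N‖⁻¹) • (inner A f f : A) ≤
        (∑' j, v j * v j * (inner A (θ (Λ j (P j (C f)))) (θ (Λ j (P j (C' f)))) : A)) ∧
      (∑' j, v j * v j * (inner A (θ (Λ j (P j (C f)))) (θ (Λ j (P j (C' f)))) : A)) ≤
        (b * ‖θ‖ ^ 2) • (inner A f f : A) := by
  intro f
  have hθΛCf : ∀ j, θ (Λ j (P j (C f))) = Λ j (P j (C (θ f))) := fun j => by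
    have := DFunLike.congr_fun (hθΛC j) f
    simpa using this
  have hθΛC'f : ∀ j, θ (Λ j (P j (C' f))) = Λ j (P j (C' (θ f))) := fun j => by
    have := DFunLike.congr_fun (hθΛC' j) f
    simpa using this
  have hN₁p : ∀ x : H, N (θad (θ x)) = x := fun x => by
    have := DFunLike.congr_fun hN₁ x
    simpa using this
  have hN₂p : ∀ x : H, θad (θ (N x)) = x := fun x => by
    have := DFunLike.congr_fun hN₂ x
    simpa using this
  refine ⟨?_, ?_, ?_⟩
  · simp only [hθΛCf, hθΛC'f]
    exact hsum (θ f)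
  · simp only [hθΛCf, hθΛC'f]
    rcases eq_or_ne ‖N‖ 0 with hN0 | hN0
    · have hNz : N = 0 := norm_eq_zero.mp hN0
      have hf0 : f = 0 := by rw [← hN₁p f, hNz]; simp
      have hθ0 : θ f = 0 := by rw [hf0, map_zero]
      have hlhs : (a * ‖N‖⁻¹) • (inner A f f : A) = 0 := by
        rw [hf0]
        simp [ControlledGFusionAux.rc_inner_zero_right]
      rw [hlhs]
      calc (0 : A) = a • (inner A (θ f) (θ f) : A) := by
            rw [hθ0]; simp [ControlledGFusionAux.rc_inner_zero_right]
        _ ≤ _ := (hframe (θ f)).1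
    · have hNpos : 0 < ‖N‖ := lt_of_le_of_ne (norm_nonneg N) (Ne.symm hN0)
      have key : (inner A f f : A) ≤ ‖N‖ • inner A (θ f) (θ f) :=
        ControlledGFusionAux.inv_bound hθad hN₁p hN₂p f
      calc (a * ‖N‖⁻¹) • (inner A f f : A)
          ≤ (a * ‖N‖⁻¹) • (‖N‖ • (inner A (θ f) (θ f) : A)) :=
            smul_le_smul_of_nonneg_left key (by positivity)
        _ = a • (inner A (θ f) (θ f) : A) := by
            rw [smul_smul]
            congr 1
            field_simp
        _ ≤ _ := (hframe (θ f)).1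
  · simp only [hθΛCf, hθΛC'f]
    have key : (inner A (θ f) (θ f) : A) ≤ (‖θ‖ ^ 2) • inner A f f :=
      ControlledGFusionAux.adj_bound hθad f
    calc (∑' j, v j * v j * (inner A (Λ j (P j (C (θ f)))) (Λ j (P j (C' (θ f)))) : A))
        ≤ b • (inner A (θ f) (θ f) : A) := (hframe (θ f)).2
      _ ≤ b • ((‖θ‖ ^ 2) • (inner A f f : A)) :=
          smul_le_smul_of_nonneg_left key (le_trans ha.le hab)
      _ = (b * ‖θ‖ ^ 2) • (inner A f f : A) := smul_smul b (‖θ‖ ^ 2) _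
end
end

section
/- Let (H, A, ⟨·,·⟩_A) and (H, B, ⟨·,·⟩_B) be Hilbert C*-modules over unital C*-algebras A and B, φ : A → B a *-homomorphism, and θ a surjective map on H with ⟨θf, θg⟩_B = φ(⟨f,g⟩_A) for all f,g ∈ H. If {W_j, Λ_j, v_j} is a (C,C')-controlled g-fusion frame for (H, A) with bounds A and B, and θ commutes with each Λ_j P_{W_j}, with C, and with C', then {W_j, Λ_j, φ(v_j)} is a (C,C')-controlled g-fusion frame for (H, B) with the same bounds A, B, and the frame operators satisfy ⟨S_B θf, θg⟩_B = φ(⟨S_A f, g⟩_A). -/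
open scoped RightActions

noncomputable section

/-- The `CStarModule` class as it stood in the older Mathlib (right action via `Aᵐᵒᵖ`,
inner product linear in the second argument for that right action). -/
class CStarModuleOld (A : outParam <| Type*) (E : Type*) [NonUnitalSemiring A] [StarRing A]
    [Module ℂ A] [AddCommGroup E] [Module ℂ E] [PartialOrder A] [SMul Aᵐᵒᵖ E] [Norm A] [Norm E]
    extends Inner A E where
  inner_add_right {x} {y} {z} : inner x (y + z) = inner x y + inner x z
  inner_self_nonneg {x} : 0 ≤ inner x x
  inner_self {x} : inner x x = 0 ↔ x = 0
  inner_op_smul_right {a : A} {x y : E} : inner x (y <• a) = inner x y * a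
  inner_smul_right_complex {z : ℂ} {x} {y} : inner x (z • y) = z • inner x y
  star_inner x y : star (inner x y) = inner y x
  norm_eq_sqrt_norm_inner_self x : ‖x‖ = √‖inner x x‖

theorem CStarModuleOld.inner_add_left' {A : Type*} [CStarAlgebra A] [PartialOrder A] {E : Type*} [NormedAddCommGroup E]
    [NormedSpace ℂ E] [SMul Aᵐᵒᵖ E] [CStarModuleOld A E] (x y z : E) :
    inner A (x + y) z = inner A x z + inner A y z := by
  rw [← CStarModuleOld.star_inner z (x + y), CStarModuleOld.inner_add_right, star_add,
    CStarModuleOld.star_inner, CStarModuleOld.star_inner]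

theorem CStarModuleOld.inner_neg_right' {A : Type*} [CStarAlgebra A] [PartialOrder A] {E : Type*} [NormedAddCommGroup E]
    [NormedSpace ℂ E] [SMul Aᵐᵒᵖ E] [CStarModuleOld A E] (x y : E) :
    inner A x (-y) = -inner A x y := by
  rw [← neg_one_smul ℂ y, CStarModuleOld.inner_smul_right_complex, neg_one_smul]

theorem CStarModuleOld.inner_sub_right' {A : Type*} [CStarAlgebra A] [PartialOrder A] {E : Type*} [NormedAddCommGroup E]
    [NormedSpace ℂ E] [SMul Aᵐᵒᵖ E] [CStarModuleOld A E] (x y z : E) :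
    inner A x (y - z) = inner A x y - inner A x z := by
  rw [sub_eq_add_neg, CStarModuleOld.inner_add_right, CStarModuleOld.inner_neg_right',
    ← sub_eq_add_neg]

theorem CStarModuleOld.inner_sub_left' {A : Type*} [CStarAlgebra A] [PartialOrder A] {E : Type*} [NormedAddCommGroup E]
    [NormedSpace ℂ E] [SMul Aᵐᵒᵖ E] [CStarModuleOld A E] (x y z : E) :
    inner A (x - y) z = inner A x z - inner A y z := by
  rw [← CStarModuleOld.star_inner z (x - y), CStarModuleOld.inner_sub_right', star_sub,
    CStarModuleOld.star_inner, CStarModuleOld.star_inner]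

theorem CStarModuleOld.inner_smul_left_complex' {A : Type*} [CStarAlgebra A] [PartialOrder A] {E : Type*} [NormedAddCommGroup E]
    [NormedSpace ℂ E] [SMul Aᵐᵒᵖ E] [CStarModuleOld A E] (c : ℂ) (x y : E) :
    inner A (c • x) y = star c • inner A x y := by
  rw [← CStarModuleOld.star_inner y (c • x), CStarModuleOld.inner_smul_right_complex, star_smul,
    CStarModuleOld.star_inner]

/-- transporting a `(C,C')`-controlled g-fusion frame along a surjective
map `θ` compatible with a `*`-homomorphism `φ : A → B` of C*-algebras: `{W_j, Λ_j, φ(v_j)}`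
is a `(C,C')`-controlled g-fusion frame for the `B`-module structure with the same bounds,
and `⟨S_B θf, θg⟩_B = φ(⟨S_A f, g⟩_A)`. -/
theorem controlled_g_fusion_frame_star_hom_transport
    {A B : Type*} [CStarAlgebra A] [PartialOrder A] [StarOrderedRing A]
    [CStarAlgebra B] [PartialOrder B] [StarOrderedRing B]
    {H : Type*} [NormedAddCommGroup H] [NormedSpace ℂ H] [SMul Aᵐᵒᵖ H] [SMul Bᵐᵒᵖ H]
    [CStarModuleOld A H] [CStarModuleOld B H]
    {J : Type*}
    (C C' : H →L[ℂ] H) (P : J → H →L[ℂ] H) (Λ : J → H →L[ℂ] H)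
    (Λad : J → H →L[ℂ] H) (v : J → A)
    (hΛad : ∀ (j) (x u : H), (inner A (Λ j x) u : A) = inner A x (Λad j u))
    (hP_idem : ∀ j, (P j).comp (P j) = P j)
    (hP_sa : ∀ (j) (f g : H), (inner A (P j f) g : A) = inner A f (P j g))
    (hC_sa : ∀ f g : H, (inner A (C f) g : A) = inner A f (C g))
    (hC'_sa : ∀ f g : H, (inner A (C' f) g : A) = inner A f (C' g))
    (hC_pos : ∀ f : H, 0 ≤ (inner A (C f) f : A))
    (hC'_pos : ∀ f : H, 0 ≤ (inner A (C' f) f : A))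
    (hC_inv : Function.Bijective C) (hC'_inv : Function.Bijective C')
    (hCC' : C.comp C' = C'.comp C)
    (hCT : ∀ j, C.comp ((P j).comp ((Λad j).comp ((Λ j).comp (P j))))
      = ((P j).comp ((Λad j).comp ((Λ j).comp (P j)))).comp C)
    (hC'T : ∀ j, C'.comp ((P j).comp ((Λad j).comp ((Λ j).comp (P j))))
      = ((P j).comp ((Λad j).comp ((Λ j).comp (P j)))).comp C')
    (hv_pos : ∀ j, 0 ≤ v j) (hv_inv : ∀ j, IsUnit (v j))
    (hv_central : ∀ (j) (a : A), Commute (v j) a)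
    (a b : ℝ) (ha : 0 < a) (hab : a ≤ b)
    (hsumA : ∀ f : H, Summable fun j =>
      v j * v j * (inner A (Λ j (P j (C f))) (Λ j (P j (C' f))) : A))
    (hframe : ∀ f : H,
      a • (inner A f f : A) ≤
        (∑' j, v j * v j * (inner A (Λ j (P j (C f))) (Λ j (P j (C' f))) : A)) ∧
      (∑' j, v j * v j * (inner A (Λ j (P j (C f))) (Λ j (P j (C' f))) : A)) ≤
        b • (inner A f f : A))
    (φ : A →⋆ₐ[ℂ] B) (θ : H → H) (hθ_surj : Function.Surjective θ)
    (hθφ : ∀ f g : H, (inner B (θ f) (θ g) : B) = φ ((inner A f g : A)))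
    (hθΛP : ∀ (j) (f : H), θ (Λ j (P j f)) = Λ j (P j (θ f)))
    (hθC : ∀ f : H, θ (C f) = C (θ f)) (hθC' : ∀ f : H, θ (C' f) = C' (θ f))
    (SA SB : H →L[ℂ] H)
    (hSA : ∀ f g : H, (inner A (SA f) g : A) =
      ∑' j, v j * v j * (inner A (Λ j (P j (C f))) (Λ j (P j (C' g))) : A))
    (hSB : ∀ f g : H, (inner B (SB f) g : B) =
      ∑' j, φ (v j) * φ (v j) * (inner B (Λ j (P j (C f))) (Λ j (P j (C' g))) : B)) :
    (∀ g : H,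
      Summable (fun j =>
        φ (v j) * φ (v j) * (inner B (Λ j (P j (C g))) (Λ j (P j (C' g))) : B)) ∧
      a • (inner B g g : B) ≤
        (∑' j, φ (v j) * φ (v j) * (inner B (Λ j (P j (C g))) (Λ j (P j (C' g))) : B)) ∧
      (∑' j, φ (v j) * φ (v j) * (inner B (Λ j (P j (C g))) (Λ j (P j (C' g))) : B)) ≤
        b • (inner B g g : B)) ∧
    (∀ f g : H, (inner B (SB (θ f)) (θ g) : B) = φ ((inner A (SA f) g : A))) := by

  classical
  -- φ is continuous
  have hφcont : Continuous φ :=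
    AddMonoidHomClass.continuous_of_bound φ 1
      (fun x => by simpa using NonUnitalStarAlgHom.norm_apply_le φ x)
  -- φ is monotone
  have hφmono : Monotone φ := fun x y h => OrderHomClass.mono φ h
  -- real smul via complex smul
  have coesA : ∀ (r : ℝ) (x : A), r • x = (r : ℂ) • x := by
    intro r x
    rw [← smul_one_smul ℂ r x, Complex.real_smul, mul_one]
  have coesB : ∀ (r : ℝ) (x : B), r • x = (r : ℂ) • x := by
    intro r x
    rw [← smul_one_smul ℂ r x, Complex.real_smul, mul_one]
  have hφrsmul : ∀ (r : ℝ) (x : A), φ (r • x) = r • φ x := by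
    intro r x
    rw [coesA, map_smul, ← coesB]
  -- termwise transport
  have hterm : ∀ (j : J) (f g : H),
      φ (v j * v j * (inner A (Λ j (P j (C f))) (Λ j (P j (C' g))) : A)) =
      φ (v j) * φ (v j) * (inner B (Λ j (P j (C (θ f)))) (Λ j (P j (C' (θ g)))) : B) := by
    intro j f g
    rw [map_mul, map_mul, ← hθφ, hθΛP, hθC, hθΛP, hθC']
  -- mixed summability via polarization
  have hsumM : ∀ f g : H, Summable fun j =>
      v j * v j * (inner A (Λ j (P j (C f))) (Λ j (P j (C' g))) : A) := by
    intro f g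
    have h0 := hsumA (f + g)
    have h1 := (hsumA (f + Complex.I • g)).const_smul (-Complex.I)
    have h2 := (hsumA (f - g)).const_smul (-1 : ℂ)
    have h3 := (hsumA (f - Complex.I • g)).const_smul (Complex.I)
    have hS := (((h0.add h1).add h2).add h3).const_smul ((4 : ℂ)⁻¹)
    refine hS.congr fun j => ?_
    simp only [map_add, map_sub, map_smul, CStarModuleOld.inner_add_left',
      CStarModuleOld.inner_add_right, CStarModuleOld.inner_sub_left', CStarModuleOld.inner_sub_right',
      CStarModuleOld.inner_smul_left_complex', CStarModuleOld.inner_smul_right_complex,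
      Complex.star_def, Complex.conj_I, mul_add, mul_sub, mul_smul_comm, neg_smul,
      smul_add, smul_sub, smul_smul, neg_mul, mul_neg, Complex.I_mul_I, neg_neg, one_smul]
    match_scalars <;> (ring_nf; try simp [Complex.I_sq])
  constructor
  · -- frame bounds in B
    intro g
    obtain ⟨f, hf⟩ := hθ_surj g
    subst hf
    have hfun : (fun j =>
        φ (v j) * φ (v j) * (inner B (Λ j (P j (C (θ f)))) (Λ j (P j (C' (θ f)))) : B)) =
        fun j => φ (v j * v j * (inner A (Λ j (P j (C f))) (Λ j (P j (C' f))) : A)) := by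
      funext j; exact (hterm j f f).symm
    have hsumB : Summable fun j =>
        φ (v j) * φ (v j) * (inner B (Λ j (P j (C (θ f)))) (Λ j (P j (C' (θ f)))) : B) := by
      rw [hfun]; exact (hsumA f).map φ hφcont
    have htsum : (∑' j, φ (v j) * φ (v j) *
        (inner B (Λ j (P j (C (θ f)))) (Λ j (P j (C' (θ f)))) : B)) =
        φ (∑' j, v j * v j * (inner A (Λ j (P j (C f))) (Λ j (P j (C' f))) : A)) := by
      rw [hfun]
      exact ((hsumA f).map_tsum φ hφcont).symm
    have hinner : (inner B (θ f) (θ f) : B) = φ (inner A f f : A) := hθφ f f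
    refine ⟨hsumB, ?_, ?_⟩
    · rw [htsum, hinner, ← hφrsmul]
      exact hφmono (hframe f).1
    · rw [htsum, hinner, ← hφrsmul]
      exact hφmono (hframe f).2
  · -- frame operator identity
    intro f g
    rw [hSB, hSA]
    calc (∑' j, φ (v j) * φ (v j) * (inner B (Λ j (P j (C (θ f)))) (Λ j (P j (C' (θ g)))) : B))
        = ∑' j, φ (v j * v j * (inner A (Λ j (P j (C f))) (Λ j (P j (C' g))) : A)) :=
          tsum_congr fun j => (hterm j f g).symm
      _ = φ (∑' j, v j * v j * (inner A (Λ j (P j (C f))) (Λ j (P j (C' g))) : A)) :=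
          ((hsumM f g).map_tsum φ hφcont).symm
end
end

section
/- Perturbation theorem: Let Λ_{CC'} = {W_j, Λ_j, v_j} be a (C,C')-controlled K-g-fusion frame for H with bounds A, B, and let Γ_j ∈ End*_A(H,H_j), with weights u_j and submodules V_j. Suppose there exist 0 < λ₁, λ₂ < 1 and ε > 0 with ε < (1−λ₁)√A such that for every f ∈ H, ‖((v_jΛ_jP_{W_j} − u_jΓ_jP_{V_j})(CC')^{1/2}f)_j‖ ≤ λ₁‖(v_jΛ_jP_{W_j}(CC')^{1/2}f)_j‖ + λ₂‖(u_jΓ_jP_{V_j}(CC')^{1/2}f)_j‖ + ε‖K*f‖ (norms in ℓ²({H_j})). Then {V_j, Γ_j, u_j} is a (C,C')-controlled K-g-fusion frame for H with bounds ((1−λ₁)√A − ε)²/(1+λ₂)² and ((λ₁+1)√B + ε‖K‖)²/(1−λ₂)². -/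
open scoped RightActions

noncomputable section

variable {A : Type*} [CStarAlgebra A] [PartialOrder A] [StarOrderedRing A]
variable {H : Type*} [NormedAddCommGroup H] [NormedSpace ℂ H] [SMul Aᵐᵒᵖ H] [CStarModuleRight A H]
variable {J : Type*} {Hs : J → Type*} [∀ j, NormedAddCommGroup (Hs j)]
  [∀ j, NormedSpace ℂ (Hs j)] [∀ j, SMul Aᵐᵒᵖ (Hs j)] [∀ j, CStarModuleRight A (Hs j)]

/-- Type synonym turning a right Hilbert C⋆-module into a (left) Mathlib `CStarModule`. -/
def RevMod (E : Type*) := E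

section RevModSec
variable {E : Type*} [NormedAddCommGroup E] [NormedSpace ℂ E] [SMul Aᵐᵒᵖ E] [CStarModuleRight A E]

lemma csr_inner_add_left (x y z : E) :
    (inner A (x + y) z : A) = inner A x z + inner A y z := by
  rw [← CStarModuleRight.star_inner z (x + y), CStarModuleRight.inner_add_right, star_add,
    CStarModuleRight.star_inner, CStarModuleRight.star_inner]

lemma csr_inner_neg_right (x y : E) : (inner A x (-y) : A) = -inner A x y := by
  rw [show -y = (-1 : ℂ) • y by simp, CStarModuleRight.inner_smul_right_complex]
  simp

lemma csr_inner_neg_left (x y : E) : (inner A (-x) y : A) = -inner A x y := by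
  rw [← CStarModuleRight.star_inner y (-x), csr_inner_neg_right, star_neg,
    CStarModuleRight.star_inner]

lemma csr_aux_op (a : A) (x y : E) :
    (inner A (y <• star a) x : A) = a * inner A y x := by
  rw [← CStarModuleRight.star_inner x, CStarModuleRight.inner_op_smul_right, star_mul, star_star,
    CStarModuleRight.star_inner]

lemma csr_aux_cx (z : ℂ) (x y : E) :
    (inner A ((starRingEnd ℂ z) • y) x : A) = z • inner A y x := by
  rw [← CStarModuleRight.star_inner x, CStarModuleRight.inner_smul_right_complex, star_smul,
    CStarModuleRight.star_inner]
  simp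

instance instNACGRevMod : NormedAddCommGroup (RevMod E) := inferInstanceAs (NormedAddCommGroup E)

instance instModuleRevMod : Module ℂ (RevMod E) := Module.compHom E (starRingEnd ℂ)

instance instSMulRevMod : SMul A (RevMod E) := ⟨fun a x => (show E from x) <• star a⟩

instance instCStarModuleRevMod : CStarModule A (RevMod E) where
  inner x y := inner A (show E from y) (show E from x)
  inner_add_right {x y z} := csr_inner_add_left (A := A) (E := E) y z x
  inner_self_nonneg {x} := CStarModuleRight.inner_self_nonneg (A := A) (E := E) (x := x)
  inner_self {x} := CStarModuleRight.inner_self (A := A) (E := E) (x := x)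
  inner_op_smul_right {a x y} := csr_aux_op (A := A) (E := E) a x y
  inner_smul_right_complex {z x y} := csr_aux_cx (A := A) (E := E) z x y
  star_inner x y := CStarModuleRight.star_inner (A := A) (E := E) y x
  norm_eq_sqrt_norm_inner_self {x} := CStarModuleRight.norm_eq_sqrt_norm_inner_self (A := A) (E := E) x

end RevModSec

open WithCStarModule in
lemma aux_finset_tri (s : Finset J) (g h : ∀ j, Hs j) :
    Real.sqrt ‖∑ j ∈ s, (inner A (g j + h j) (g j + h j) : A)‖ ≤
      Real.sqrt ‖∑ j ∈ s, (inner A (g j) (g j) : A)‖ +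
      Real.sqrt ‖∑ j ∈ s, (inner A (h j) (h j) : A)‖ := by
  classical
  let G : C⋆ᵐᵒᵈ(A, Π j : s, RevMod (Hs j)) := (equiv _ _).symm fun j => g j
  let Hh : C⋆ᵐᵒᵈ(A, Π j : s, RevMod (Hs j)) := (equiv _ _).symm fun j => h j
  have tri := norm_add_le G Hh
  have hGH : ‖G + Hh‖ = Real.sqrt ‖∑ j ∈ s, (inner A (g j + h j) (g j + h j) : A)‖ := by
    rw [pi_norm]
    congr 1
    rw [← Finset.sum_coe_sort s (fun j => (inner A (g j + h j) (g j + h j) : A))]; rfl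
  have hG : ‖G‖ = Real.sqrt ‖∑ j ∈ s, (inner A (g j) (g j) : A)‖ := by
    rw [pi_norm]
    congr 1
    rw [← Finset.sum_coe_sort s (fun j => (inner A (g j) (g j) : A))]; rfl
  have hH : ‖Hh‖ = Real.sqrt ‖∑ j ∈ s, (inner A (h j) (h j) : A)‖ := by
    rw [pi_norm]
    congr 1
    rw [← Finset.sum_coe_sort s (fun j => (inner A (h j) (h j) : A))]; rfl
  rw [hGH, hG, hH] at tri
  exact tri

lemma aux_tsum_tri (g h k : ∀ j, Hs j) (hk : ∀ j, k j = g j + h j)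
    (hg : Summable fun j => (inner A (g j) (g j) : A))
    (hh : Summable fun j => (inner A (h j) (h j) : A))
    (hks : Summable fun j => (inner A (k j) (k j) : A)) :
    Real.sqrt ‖∑' j, (inner A (k j) (k j) : A)‖ ≤
      Real.sqrt ‖∑' j, (inner A (g j) (g j) : A)‖ +
      Real.sqrt ‖∑' j, (inner A (h j) (h j) : A)‖ := by
  set c := Real.sqrt ‖∑' j, (inner A (g j) (g j) : A)‖ +
      Real.sqrt ‖∑' j, (inner A (h j) (h j) : A)‖ with hc
  have hc0 : 0 ≤ c := add_nonneg (Real.sqrt_nonneg _) (Real.sqrt_nonneg _)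
  have hpart : ∀ (f : J → A), (∀ j, 0 ≤ f j) → Summable f → ∀ s : Finset J,
      ‖∑ j ∈ s, f j‖ ≤ ‖∑' j, f j‖ := fun f hf hsf s =>
    CStarAlgebra.norm_le_norm_of_nonneg_of_le (Finset.sum_nonneg fun j _ => hf j)
      (Summable.sum_le_tsum s (fun j _ => hf j) hsf)
  have key : ∀ s : Finset J, ‖∑ j ∈ s, (inner A (k j) (k j) : A)‖ ≤ c ^ 2 := by
    intro s
    have t0 : Real.sqrt ‖∑ j ∈ s, (inner A (k j) (k j) : A)‖ ≤ c := by
      have e : ∑ j ∈ s, (inner A (k j) (k j) : A)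
          = ∑ j ∈ s, (inner A (g j + h j) (g j + h j) : A) := by
        exact Finset.sum_congr rfl fun j _ => by rw [hk j]
      rw [e]
      refine (aux_finset_tri s g h).trans ?_
      exact add_le_add
        (Real.sqrt_le_sqrt (hpart _ (fun j => CStarModuleRight.inner_self_nonneg) hg s))
        (Real.sqrt_le_sqrt (hpart _ (fun j => CStarModuleRight.inner_self_nonneg) hh s))
    calc ‖∑ j ∈ s, (inner A (k j) (k j) : A)‖
        = (Real.sqrt ‖∑ j ∈ s, (inner A (k j) (k j) : A)‖) ^ 2 :=
          (Real.sq_sqrt (norm_nonneg _)).symm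
      _ ≤ c ^ 2 := pow_le_pow_left₀ (Real.sqrt_nonneg _) t0 2
  have hlim : ‖∑' j, (inner A (k j) (k j) : A)‖ ≤ c ^ 2 := by
    exact le_of_tendsto hks.hasSum.norm (Filter.Eventually.of_forall key)
  calc Real.sqrt ‖∑' j, (inner A (k j) (k j) : A)‖ ≤ Real.sqrt (c ^ 2) :=
        Real.sqrt_le_sqrt hlim
    _ = c := Real.sqrt_sq hc0


set_option maxHeartbeats 1000000 in
/-- perturbation of `(C,C')`-controlled `K`-g-fusion frames. -/
theorem controlled_K_g_fusion_frame_perturbation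
    (C C' : H →L[ℂ] H) (P : J → H →L[ℂ] H) (Λ : ∀ j, H →L[ℂ] Hs j)
    (Λad : ∀ j, Hs j →L[ℂ] H) (v : J → A)
    (hΛad : ∀ (j) (x : H) (u : Hs j), (inner A (Λ j x) u : A) = inner A x (Λad j u))
    (hP_idem : ∀ j, (P j).comp (P j) = P j)
    (hP_sa : ∀ (j) (f g : H), (inner A (P j f) g : A) = inner A f (P j g))
    (hC_sa : ∀ f g : H, (inner A (C f) g : A) = inner A f (C g))
    (hC'_sa : ∀ f g : H, (inner A (C' f) g : A) = inner A f (C' g))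
    (hC_pos : ∀ f : H, 0 ≤ (inner A (C f) f : A))
    (hC'_pos : ∀ f : H, 0 ≤ (inner A (C' f) f : A))
    (hC_inv : Function.Bijective C) (hC'_inv : Function.Bijective C')
    (hCC' : C.comp C' = C'.comp C)
    (hCT : ∀ j, C.comp ((P j).comp ((Λad j).comp ((Λ j).comp (P j))))
      = ((P j).comp ((Λad j).comp ((Λ j).comp (P j)))).comp C)
    (hC'T : ∀ j, C'.comp ((P j).comp ((Λad j).comp ((Λ j).comp (P j))))
      = ((P j).comp ((Λad j).comp ((Λ j).comp (P j)))).comp C')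
    (hv_pos : ∀ j, 0 ≤ v j) (hv_inv : ∀ j, IsUnit (v j))
    (hv_central : ∀ (j) (a : A), Commute (v j) a)
    (K Kad : H →L[ℂ] H)
    (hKad : ∀ x y : H, (inner A (K x) y : A) = inner A x (Kad y))
    (Γ : ∀ j, H →L[ℂ] Hs j) (Γad : ∀ j, Hs j →L[ℂ] H)
    (P' : J → H →L[ℂ] H) (u : J → A)
    (hΓad : ∀ (j) (x : H) (w : Hs j), (inner A (Γ j x) w : A) = inner A x (Γad j w))
    (hP'_idem : ∀ j, (P' j).comp (P' j) = P' j)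
    (hP'_sa : ∀ (j) (f g : H), (inner A (P' j f) g : A) = inner A f (P' j g))
    (hu_pos : ∀ j, 0 ≤ u j) (hu_inv : ∀ j, IsUnit (u j))
    (hu_central : ∀ (j) (a : A), Commute (u j) a)
    (hC'T₂ : ∀ j, C.comp ((P' j).comp ((Γad j).comp ((Γ j).comp (P' j))))
      = ((P' j).comp ((Γad j).comp ((Γ j).comp (P' j)))).comp C)
    (hC'T₃ : ∀ j, C'.comp ((P' j).comp ((Γad j).comp ((Γ j).comp (P' j))))
      = ((P' j).comp ((Γad j).comp ((Γ j).comp (P' j)))).comp C')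
    (R : H →L[ℂ] H) (hR : R.comp R = C.comp C')
    (hR_sa : ∀ f g : H, (inner A (R f) g : A) = inner A f (R g))
    (hR_pos : ∀ f : H, 0 ≤ (inner A (R f) f : A))
    (a b : ℝ) (ha : 0 < a) (hab : a ≤ b)
    (hsumΛ : ∀ f : H, Summable fun j =>
      (inner A ((Λ j (P j (R f))) <• (v j)) ((Λ j (P j (R f))) <• (v j)) : A))
    (hsumΓ : ∀ f : H, Summable fun j =>
      (inner A ((Γ j (P' j (R f))) <• (u j)) ((Γ j (P' j (R f))) <• (u j)) : A))
    (hsumD : ∀ f : H, Summable fun j =>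
      (inner A ((Λ j (P j (R f))) <• (v j) - (Γ j (P' j (R f))) <• (u j))
        ((Λ j (P j (R f))) <• (v j) - (Γ j (P' j (R f))) <• (u j)) : A))
    (hframeΛ : ∀ f : H,
      a * ‖Kad f‖ ^ 2 ≤
        ‖∑' j, (inner A ((Λ j (P j (R f))) <• (v j)) ((Λ j (P j (R f))) <• (v j)) : A)‖ ∧
      ‖∑' j, (inner A ((Λ j (P j (R f))) <• (v j)) ((Λ j (P j (R f))) <• (v j)) : A)‖ ≤
        b * ‖f‖ ^ 2)
    (lam₁ lam₂ ε : ℝ)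
    (hlam₁ : 0 < lam₁) (hlam₁' : lam₁ < 1) (hlam₂ : 0 < lam₂) (hlam₂' : lam₂ < 1)
    (hε : 0 < ε) (hε' : ε < (1 - lam₁) * Real.sqrt a)
    (hpert : ∀ f : H,
      Real.sqrt ‖∑' j,
        (inner A ((Λ j (P j (R f))) <• (v j) - (Γ j (P' j (R f))) <• (u j))
          ((Λ j (P j (R f))) <• (v j) - (Γ j (P' j (R f))) <• (u j)) : A)‖ ≤
      lam₁ * Real.sqrt
        ‖∑' j, (inner A ((Λ j (P j (R f))) <• (v j)) ((Λ j (P j (R f))) <• (v j)) : A)‖ +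
      lam₂ * Real.sqrt
        ‖∑' j, (inner A ((Γ j (P' j (R f))) <• (u j)) ((Γ j (P' j (R f))) <• (u j)) : A)‖ +
      ε * ‖Kad f‖) :
    ∀ f : H,
      ((1 - lam₁) * Real.sqrt a - ε) ^ 2 / (1 + lam₂) ^ 2 * ‖Kad f‖ ^ 2 ≤
        ‖∑' j, (inner A ((Γ j (P' j (R f))) <• (u j)) ((Γ j (P' j (R f))) <• (u j)) : A)‖ ∧
      ‖∑' j, (inner A ((Γ j (P' j (R f))) <• (u j)) ((Γ j (P' j (R f))) <• (u j)) : A)‖ ≤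
        ((lam₁ + 1) * Real.sqrt b + ε * ‖K‖) ^ 2 / (1 - lam₂) ^ 2 * ‖f‖ ^ 2 := by
  intro f
  have hpf := hpert f
  have hfr := hframeΛ f
  have hDrev : (fun j => (inner A ((Γ j (P' j (R f))) <• (u j) - (Λ j (P j (R f))) <• (v j))
        ((Γ j (P' j (R f))) <• (u j) - (Λ j (P j (R f))) <• (v j)) : A))
      = fun j => (inner A ((Λ j (P j (R f))) <• (v j) - (Γ j (P' j (R f))) <• (u j))
        ((Λ j (P j (R f))) <• (v j) - (Γ j (P' j (R f))) <• (u j)) : A) := by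
    funext j
    rw [← neg_sub ((Λ j (P j (R f))) <• (v j)) ((Γ j (P' j (R f))) <• (u j)),
      csr_inner_neg_left, csr_inner_neg_right, neg_neg]
  have ineq1 : Real.sqrt
        ‖∑' j, (inner A ((Λ j (P j (R f))) <• (v j)) ((Λ j (P j (R f))) <• (v j)) : A)‖ ≤
      Real.sqrt
        ‖∑' j, (inner A ((Γ j (P' j (R f))) <• (u j)) ((Γ j (P' j (R f))) <• (u j)) : A)‖ +
      Real.sqrt ‖∑' j, (inner A ((Λ j (P j (R f))) <• (v j) - (Γ j (P' j (R f))) <• (u j))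
        ((Λ j (P j (R f))) <• (v j) - (Γ j (P' j (R f))) <• (u j)) : A)‖ :=
    aux_tsum_tri (fun j => (Γ j (P' j (R f))) <• (u j))
      (fun j => (Λ j (P j (R f))) <• (v j) - (Γ j (P' j (R f))) <• (u j))
      (fun j => (Λ j (P j (R f))) <• (v j))
      (fun j => (add_sub_cancel _ _).symm) (hsumΓ f) (hsumD f) (hsumΛ f)
  have ineq2 : Real.sqrt
        ‖∑' j, (inner A ((Γ j (P' j (R f))) <• (u j)) ((Γ j (P' j (R f))) <• (u j)) : A)‖ ≤
      Real.sqrt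
        ‖∑' j, (inner A ((Λ j (P j (R f))) <• (v j)) ((Λ j (P j (R f))) <• (v j)) : A)‖ +
      Real.sqrt ‖∑' j, (inner A ((Λ j (P j (R f))) <• (v j) - (Γ j (P' j (R f))) <• (u j))
        ((Λ j (P j (R f))) <• (v j) - (Γ j (P' j (R f))) <• (u j)) : A)‖ := by
    have h := aux_tsum_tri (fun j => (Λ j (P j (R f))) <• (v j))
      (fun j => (Γ j (P' j (R f))) <• (u j) - (Λ j (P j (R f))) <• (v j))
      (fun j => (Γ j (P' j (R f))) <• (u j))
      (fun j => (add_sub_cancel _ _).symm) (hsumΛ f) (by rw [hDrev]; exact hsumD f) (hsumΓ f)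
    rwa [show (∑' j, (inner A ((Γ j (P' j (R f))) <• (u j) - (Λ j (P j (R f))) <• (v j))
          ((Γ j (P' j (R f))) <• (u j) - (Λ j (P j (R f))) <• (v j)) : A))
        = ∑' j, (inner A ((Λ j (P j (R f))) <• (v j) - (Γ j (P' j (R f))) <• (u j))
          ((Λ j (P j (R f))) <• (v j) - (Γ j (P' j (R f))) <• (u j)) : A) from by rw [hDrev]]
      at h
  set L := Real.sqrt
    ‖∑' j, (inner A ((Λ j (P j (R f))) <• (v j)) ((Λ j (P j (R f))) <• (v j)) : A)‖ with hL
  set G := Real.sqrt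
    ‖∑' j, (inner A ((Γ j (P' j (R f))) <• (u j)) ((Γ j (P' j (R f))) <• (u j)) : A)‖ with hG
  set D := Real.sqrt ‖∑' j, (inner A ((Λ j (P j (R f))) <• (v j) - (Γ j (P' j (R f))) <• (u j))
    ((Λ j (P j (R f))) <• (v j) - (Γ j (P' j (R f))) <• (u j)) : A)‖ with hD
  set t := ‖Kad f‖ with ht
  have hL0 : 0 ≤ L := Real.sqrt_nonneg _
  have hG0 : 0 ≤ G := Real.sqrt_nonneg _
  have hD0 : 0 ≤ D := Real.sqrt_nonneg _
  have ht0 : 0 ≤ t := norm_nonneg _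
  have hL2 : L ^ 2 = ‖∑' j, (inner A ((Λ j (P j (R f))) <• (v j))
      ((Λ j (P j (R f))) <• (v j)) : A)‖ := Real.sq_sqrt (norm_nonneg _)
  have hG2 : G ^ 2 = ‖∑' j, (inner A ((Γ j (P' j (R f))) <• (u j))
      ((Γ j (P' j (R f))) <• (u j)) : A)‖ := Real.sq_sqrt (norm_nonneg _)
  clear_value L G D t
  clear hΛad hP_idem hP_sa hC_sa hC'_sa hC_pos hC'_pos hC_inv hC'_inv hCC' hCT hC'T
    hv_pos hv_inv hv_central hΓad hP'_idem hP'_sa hu_pos hu_inv hu_central hC'T₂ hC'T₃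
    hR hR_sa hR_pos hsumΛ hsumΓ hsumD hframeΛ hpert hDrev
  have hLlow : Real.sqrt a * t ≤ L := by
    have h1 : a * t ^ 2 ≤ L ^ 2 := by rw [hL2]; exact hfr.1
    have h2 : Real.sqrt (a * t ^ 2) ≤ Real.sqrt (L ^ 2) := Real.sqrt_le_sqrt h1
    rwa [Real.sqrt_mul (le_of_lt ha), Real.sqrt_sq ht0, Real.sqrt_sq hL0] at h2
  have hLup : L ≤ Real.sqrt b * ‖f‖ := by
    have h1 : L ^ 2 ≤ b * ‖f‖ ^ 2 := by rw [hL2]; exact hfr.2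
    have h2 : Real.sqrt (L ^ 2) ≤ Real.sqrt (b * ‖f‖ ^ 2) := Real.sqrt_le_sqrt h1
    rwa [Real.sqrt_sq hL0, Real.sqrt_mul (le_trans (le_of_lt ha) hab),
      Real.sqrt_sq (norm_nonneg _)] at h2
  have hKadf : t ≤ ‖K‖ * ‖f‖ := by
    have h1 : (inner A (Kad f) (Kad f) : A) = inner A (K (Kad f)) f := (hKad (Kad f) f).symm
    have h2 : t * t ≤ (‖K‖ * ‖f‖) * t := by
      have : t ^ 2 ≤ ‖K‖ * ‖f‖ * t := by
        calc t ^ 2 = ‖(inner A (Kad f) (Kad f) : A)‖ := by rw [ht]; exact CStarModule.norm_sq_eq A (E := RevMod H) (x := show RevMod H from Kad f)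
          _ = ‖(inner A (K (Kad f)) f : A)‖ := by rw [h1]
          _ ≤ ‖K (Kad f)‖ * ‖f‖ := by
              rw [mul_comm]
              exact CStarModule.norm_inner_le (RevMod H) (A := A) (x := show RevMod H from f)
                (y := show RevMod H from K (Kad f))
          _ ≤ (‖K‖ * ‖Kad f‖) * ‖f‖ :=
              mul_le_mul_of_nonneg_right (K.le_opNorm _) (norm_nonneg _)
          _ = ‖K‖ * ‖f‖ * t := by rw [ht]; ring
      nlinarith [this]
    rcases eq_or_lt_of_le ht0 with h0 | h0
    · rw [← h0]; positivity
    · exact le_of_mul_le_mul_right h2 h0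
  constructor
  · -- lower bound
    have step : ((1 - lam₁) * Real.sqrt a - ε) * t ≤ (1 + lam₂) * G := by
      have h1 : L ≤ lam₁ * L + lam₂ * G + ε * t + G := le_trans ineq1 (by linarith)
      have h2 : (1 - lam₁) * (Real.sqrt a * t) ≤ (1 - lam₁) * L :=
        mul_le_mul_of_nonneg_left hLlow (by linarith)
      nlinarith [h1, h2]
    have hp0 : 0 ≤ ((1 - lam₁) * Real.sqrt a - ε) := by linarith [le_of_lt hε']
    have sq : (((1 - lam₁) * Real.sqrt a - ε) * t) ^ 2 ≤ ((1 + lam₂) * G) ^ 2 :=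
      pow_le_pow_left₀ (mul_nonneg hp0 ht0) step 2
    rw [div_mul_eq_mul_div, div_le_iff₀ (pow_pos (by linarith : (0:ℝ) < 1 + lam₂) 2), ← hG2]
    calc ((1 - lam₁) * Real.sqrt a - ε) ^ 2 * t ^ 2
        = (((1 - lam₁) * Real.sqrt a - ε) * t) ^ 2 := by ring
      _ ≤ ((1 + lam₂) * G) ^ 2 := sq
      _ = G ^ 2 * (1 + lam₂) ^ 2 := by ring
  · -- upper bound
    have step : (1 - lam₂) * G ≤ ((lam₁ + 1) * Real.sqrt b + ε * ‖K‖) * ‖f‖ := by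
      have h1 : G ≤ L + (lam₁ * L + lam₂ * G + ε * t) := le_trans ineq2 (by linarith)
      have h2 : (1 + lam₁) * L ≤ (1 + lam₁) * (Real.sqrt b * ‖f‖) :=
        mul_le_mul_of_nonneg_left hLup (by linarith)
      have h3 : ε * t ≤ ε * (‖K‖ * ‖f‖) := mul_le_mul_of_nonneg_left hKadf (le_of_lt hε)
      nlinarith [h1, h2, h3]
    have hq0 : 0 ≤ (1 - lam₂) * G := mul_nonneg (by linarith) hG0
    have sq : ((1 - lam₂) * G) ^ 2 ≤ (((lam₁ + 1) * Real.sqrt b + ε * ‖K‖) * ‖f‖) ^ 2 :=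
      pow_le_pow_left₀ hq0 step 2
    rw [div_mul_eq_mul_div, le_div_iff₀ (pow_pos (by linarith : (0:ℝ) < 1 - lam₂) 2), ← hG2]
    calc G ^ 2 * (1 - lam₂) ^ 2 = ((1 - lam₂) * G) ^ 2 := by ring
      _ ≤ (((lam₁ + 1) * Real.sqrt b + ε * ‖K‖) * ‖f‖) ^ 2 := sq
      _ = ((lam₁ + 1) * Real.sqrt b + ε * ‖K‖) ^ 2 * ‖f‖ ^ 2 := by ring
end
end

section
/- Let W be an orthogonally complemented closed submodule of a Hilbert C*-module H with orthogonal projection P_W, and let T be an invertible adjointable operator on H such that T*T W ⊆ W. Then TW is an orthogonally complemented closed submodule of H and P_W T* = P_W T* P_{TW}. -/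
noncomputable section

/-- if `W` is an orthogonally complemented closed submodule of a Hilbert
C*-module `H` with orthogonal projection `P`, and `T` is an invertible adjointable
operator with `T*TW ⊆ W`, then `TW` is an orthogonally complemented closed submodule
(with an orthogonal projection `Q` onto it) and `P T* = P T* P_{TW}`. -/
theorem image_submodule_orthogonally_complemented
    {A : Type*} [CStarAlgebra A] [PartialOrder A] [StarOrderedRing A]
    {H : Type*} [NormedAddCommGroup H] [NormedSpace ℂ H] [SMul A H] [CStarModule A H]
    (P : H →L[ℂ] H)
    (hP_idem : P.comp P = P)
    (hP_sa : ∀ f g : H, (inner A (P f) g : A) = inner A f (P g))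
    (T Tad Tinv : H →L[ℂ] H)
    (hTad : ∀ x y : H, (inner A (T x) y : A) = inner A x (Tad y))
    (hTinv₁ : T.comp Tinv = ContinuousLinearMap.id ℂ H)
    (hTinv₂ : Tinv.comp T = ContinuousLinearMap.id ℂ H)
    (hTW : ∀ x : H, x ∈ Set.range P → Tad (T x) ∈ Set.range P) :
    IsClosed (T '' Set.range P) ∧
    (∃ Q : H →L[ℂ] H, Q.comp Q = Q ∧ (∀ f g : H, (inner A (Q f) g : A) = inner A f (Q g)) ∧
      Set.range Q = T '' Set.range P ∧
      ∀ f : H, P (Tad f) = P (Tad (Q f))) := by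
  -- pointwise versions of the operator identities
  have hPidem : ∀ x, P (P x) = P x := fun x => by
    have := ContinuousLinearMap.ext_iff.mp hP_idem x
    simpa using this
  have hTTinv : ∀ x, T (Tinv x) = x := fun x => by
    have := ContinuousLinearMap.ext_iff.mp hTinv₁ x
    simpa using this
  have hTinvT : ∀ x, Tinv (T x) = x := fun x => by
    have := ContinuousLinearMap.ext_iff.mp hTinv₂ x
    simpa using this
  -- extensionality via inner A products
  have hext : ∀ a b : H, (∀ y : H, (inner A a y : A) = inner A b y) → a = b := by
    intro a b h
    have h0 : (inner A (a - b) (a - b) : A) = 0 := by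
      have h1 : (inner A (a - b) (a - b) : A) = inner A a (a - b) - inner A b (a - b) := by
        simp only [CStarModule.inner_sub_left]
      rw [h1, h (a - b), sub_self]
    have := CStarModule.inner_self (A := A) (x := a - b) |>.mp h0
    exact sub_eq_zero.mp this
  -- S := Tad ∘ T is self-adjoint in the sense: ⟨Sx, y⟩ = ⟨Tx, Ty⟩ = ⟨x, Sy⟩
  have hS : ∀ x y : H, (inner A (Tad (T x)) y : A) = inner A (T x) (T y) := by
    intro x y
    rw [← CStarModule.star_inner, ← hTad y (T x), CStarModule.star_inner]
  -- S maps range P to itself, fixed by P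
  have hSP : ∀ x : H, P (Tad (T (P x))) = Tad (T (P x)) := by
    intro x
    obtain ⟨z, hz⟩ := hTW (P x) ⟨x, rfl⟩
    rw [← hz, hPidem]
  -- P commutes with S
  have hcomm : ∀ x : H, P (Tad (T x)) = Tad (T (P x)) := by
    intro x
    apply hext
    intro y
    calc (inner A (P (Tad (T x))) y : A)
        = inner A (Tad (T x)) (P y) := hP_sa _ _
      _ = inner A (T x) (T (P y)) := hS _ _
      _ = inner A x (Tad (T (P y))) := hTad _ _
      _ = inner A x (P (Tad (T (P y)))) := by rw [hSP]
      _ = inner A (P x) (Tad (T (P y))) := (hP_sa _ _).symm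
      _ = inner A (T (P x)) (T (P y)) := (hTad _ _).symm
      _ = inner A (Tad (T (P x))) (P y) := (hS _ _).symm
      _ = inner A (P (Tad (T (P x)))) y := (hP_sa _ _).symm
      _ = inner A (Tad (T (P x))) y := by rw [hSP]
  -- key identity : P ∘ Tad = S ∘ P ∘ Tinv
  have hkey : ∀ g : H, P (Tad g) = Tad (T (P (Tinv g))) := by
    intro g
    have := hcomm (Tinv g)
    rw [hTTinv] at this
    exact this
  -- the projection onto T '' range P
  set Q : H →L[ℂ] H := T.comp (P.comp Tinv) with hQdef
  have hQ : ∀ x, Q x = T (P (Tinv x)) := fun x => rfl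
  have hQidem : Q.comp Q = Q := by
    ext x
    simp only [ContinuousLinearMap.comp_apply, hQ]
    rw [hTinvT, hPidem]
  have hQsa : ∀ f g : H, (inner A (Q f) g : A) = inner A f (Q g) := by
    intro f g
    calc (inner A (Q f) g : A)
        = inner A (T (P (Tinv f))) g := rfl
      _ = inner A (P (Tinv f)) (Tad g) := hTad _ _
      _ = inner A (Tinv f) (P (Tad g)) := hP_sa _ _
      _ = inner A (Tinv f) (Tad (T (P (Tinv g)))) := by rw [hkey]
      _ = inner A (T (Tinv f)) (T (P (Tinv g))) := (hTad _ _).symm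
      _ = inner A f (Q g) := by rw [hTTinv]; rfl
  have hrange : Set.range Q = T '' Set.range P := by
    ext x
    constructor
    · rintro ⟨f, rfl⟩
      exact ⟨P (Tinv f), ⟨Tinv f, rfl⟩, rfl⟩
    · rintro ⟨w, ⟨z, rfl⟩, rfl⟩
      refine ⟨T (P z), ?_⟩
      rw [hQ, hTinvT, hPidem]
  have hclosed : IsClosed (T '' Set.range P) := by
    rw [← hrange]
    have : Set.range Q = {x | Q x = x} := by
      ext x
      constructor
      · rintro ⟨f, rfl⟩
        have := ContinuousLinearMap.ext_iff.mp hQidem f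
        simpa using this
      · intro hx
        exact ⟨x, hx⟩
    rw [this]
    exact isClosed_eq Q.continuous continuous_id
  refine ⟨hclosed, Q, hQidem, hQsa, hrange, ?_⟩
  intro f
  rw [hkey f, hQ, hSP]
end
end
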